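/- arXiv:1309.2612 — 4 statements merged into one kernel-verified Lean document; each statement's English description precedes it below -/
import Mathlib

section
/- Bounded weak convergence theorem for i-measures: if μ : 𝓜 → L(E,F) is an i-measure and (fₙ) ⊆ M_𝓜(Z,E) are uniformly bounded and converge pointwise to f : Z → E in the weak topology of E, then ∫_Z fₙ dμ converges to ∫_Z f dμ in the weak topology of F. -/
open Filter Topology ENNReal

/-- A series of bounded operators `∑ Tₙ` is *independently convergent* if
`∑ Tₙ xₙ` converges in norm for every bounded sequence `(xₙ)`. -/
def IndepConv {E F : Type*} [NormedAddCommGroup E] [NormedSpace ℝ E]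
    [NormedAddCommGroup F] [NormedSpace ℝ F] (T : ℕ → E →L[ℝ] F) : Prop :=
  ∀ x : ℕ → E, (∃ C : ℝ, ∀ n, ‖x n‖ ≤ C) →
    ∃ y : F, Tendsto (fun N => ∑ n ∈ Finset.range N, T n (x n)) atTop (𝓝 y)

/-- An *i-measure* is an operator-valued set function which is countably additive in the
strong operator topology, and such that `∑ μ(Aₙ)` is independently convergent for every
sequence of pairwise disjoint measurable sets `(Aₙ)`. -/
def IsIMeasure {Z E F : Type*} [MeasurableSpace Z]
    [NormedAddCommGroup E] [NormedSpace ℝ E] [NormedAddCommGroup F] [NormedSpace ℝ F]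
    (μ : Set Z → E →L[ℝ] F) : Prop :=
  (∀ A : ℕ → Set Z, (∀ n, MeasurableSet (A n)) → Pairwise (Function.onFun Disjoint A) →
    ∀ x : E,
      Tendsto (fun N => ∑ n ∈ Finset.range N, μ (A n) x) atTop (𝓝 (μ (⋃ n, A n) x))) ∧
  (∀ A : ℕ → Set Z, (∀ n, MeasurableSet (A n)) → Pairwise (Function.onFun Disjoint A) →
    IndepConv fun n => μ (A n))

/-- The semivariation `‖μ‖_A` of an operator-valued set function `μ` on a set `A`. -/
noncomputable def semivar {Z E F : Type*} [MeasurableSpace Z]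
    [NormedAddCommGroup E] [NormedSpace ℝ E] [NormedAddCommGroup F] [NormedSpace ℝ F]
    (μ : Set Z → E →L[ℝ] F) (A : Set Z) : ℝ≥0∞ :=
  ⨆ (N : ℕ) (B : ℕ → Set Z) (_ : ∀ n, MeasurableSet (B n)) (_ : ∀ n, B n ⊆ A)
    (_ : Pairwise (Function.onFun Disjoint B)) (x : ℕ → E) (_ : ∀ n, ‖x n‖ ≤ 1),
    ENNReal.ofReal ‖∑ n ∈ Finset.range N, μ (B n) (x n)‖

/-- `HasCVIntegral μ g y`: the countably-valued measurable function `g` has integral `y`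
with respect to `μ`, i.e. `y = ∑ₙ μ(Aₙ) eₙ` for a countable measurable partition `(Aₙ)` of
the space on which `g` takes the constant values `eₙ`. -/
def HasCVIntegral {Z E F : Type*} [MeasurableSpace Z]
    [NormedAddCommGroup E] [NormedSpace ℝ E] [NormedAddCommGroup F] [NormedSpace ℝ F]
    (μ : Set Z → E →L[ℝ] F) (g : Z → E) (y : F) : Prop :=
  ∃ (e : ℕ → E) (A : ℕ → Set Z), (∀ n, MeasurableSet (A n)) ∧
    Pairwise (Function.onFun Disjoint A) ∧ (⋃ n, A n) = Set.univ ∧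
    (∀ n, ∀ z ∈ A n, g z = e n) ∧
    Tendsto (fun N => ∑ n ∈ Finset.range N, μ (A n) (e n)) atTop (𝓝 y)

/-- `HasIntegral μ f y`: the function `f` has integral `y` with respect to `μ`, obtained by
uniform approximation by countably-valued measurable functions. -/
def HasIntegral {Z E F : Type*} [MeasurableSpace Z]
    [NormedAddCommGroup E] [NormedSpace ℝ E] [NormedAddCommGroup F] [NormedSpace ℝ F]
    (μ : Set Z → E →L[ℝ] F) (f : Z → E) (y : F) : Prop :=
  ∃ (g : ℕ → Z → E) (w : ℕ → F),
    (∀ k, HasCVIntegral μ (g k) (w k)) ∧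
    (∀ (k : ℕ) (z : Z), ‖g k z - f z‖ ≤ 1 / ((k : ℝ) + 1)) ∧
    Tendsto w atTop (𝓝 y)

open Filter Topology ENNReal MeasureTheory

namespace BWCaux

variable {Z E F : Type*} [MeasurableSpace Z]
    [NormedAddCommGroup E] [NormedSpace ℝ E]
    [NormedAddCommGroup F] [NormedSpace ℝ F]

/-- scalarized operator measure -/
noncomputable def nuL (μ : Set Z → E →L[ℝ] F) (φ : StrongDual ℝ F) (A : Set Z) :
    E →L[ℝ] ℝ := φ.comp (μ A)

noncomputable def sig (μ : Set Z → E →L[ℝ] F) (φ : StrongDual ℝ F) (A : Set Z) : ℝ :=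
  ‖nuL μ φ A‖

lemma sig_nonneg (μ : Set Z → E →L[ℝ] F) (φ : StrongDual ℝ F) (A : Set Z) :
    0 ≤ sig μ φ A := norm_nonneg _

lemma abs_nu_le (μ : Set Z → E →L[ℝ] F) (φ : StrongDual ℝ F) (A : Set Z) (x : E) :
    |φ (μ A x)| ≤ sig μ φ A * ‖x‖ := by
  have := (nuL μ φ A).le_opNorm x
  simpa [sig, nuL, Real.norm_eq_abs] using this

section basics
variable {μ : Set Z → E →L[ℝ] F} (hμ : IsIMeasure μ)
include hμ

lemma mu_empty (x : E) : μ ∅ x = 0 := by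
  have h := hμ.1 (fun _ => (∅ : Set Z)) (fun _ => MeasurableSet.empty)
    (by intro i j hij; simp [Function.onFun]) x
  have hU : (⋃ _ : ℕ, (∅ : Set Z)) = ∅ := by simp
  rw [hU] at h
  have hs : (fun N : ℕ => ∑ n ∈ Finset.range N, μ (∅:Set Z) x) =
      fun N : ℕ => (N : ℕ) • μ ∅ x := by
    funext N; simp [Finset.sum_const]
  rw [hs] at h
  have hshift : Tendsto (fun N : ℕ => ((N+1) : ℕ) • μ ∅ x) atTop (𝓝 (μ ∅ x)) :=
    h.comp (tendsto_add_atTop_nat 1)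
  have hdiff : Tendsto (fun N : ℕ => ((N+1) : ℕ) • μ ∅ x - (N : ℕ) • μ ∅ x) atTop
      (𝓝 (μ ∅ x - μ ∅ x)) := hshift.sub h
  have hconst : (fun N : ℕ => ((N+1) : ℕ) • μ ∅ x - (N : ℕ) • μ ∅ x) =
      fun _ : ℕ => μ ∅ x := by
    funext N; rw [succ_nsmul]; abel
  rw [hconst, sub_self] at hdiff
  exact tendsto_nhds_unique tendsto_const_nhds hdiff

lemma mu_union {P Q : Set Z} (hP : MeasurableSet P) (hQ : MeasurableSet Q)
    (hPQ : Disjoint P Q) (x : E) : μ (P ∪ Q) x = μ P x + μ Q x := by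
  classical
  set A : ℕ → Set Z := fun n => if n = 0 then P else if n = 1 then Q else ∅ with hA
  have hAm : ∀ n, MeasurableSet (A n) := by
    intro n; simp only [hA]; split <;> [exact hP; skip]; split <;> [exact hQ; exact MeasurableSet.empty]
  have hAd : Pairwise (Function.onFun Disjoint A) := by
    intro i j hij
    simp only [Function.onFun, hA]
    rcases Nat.eq_zero_or_pos i with hi | hi
    · subst hi
      rcases Nat.eq_zero_or_pos j with hj | hj
      · omega
      · rcases eq_or_ne j 1 with hj1 | hj1
        · simp [hj1, hPQ]
        · simp [Nat.pos_iff_ne_zero.mp hj, hj1]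
    · rcases eq_or_ne i 1 with hi1 | hi1
      · subst hi1
        rcases Nat.eq_zero_or_pos j with hj | hj
        · simp [hj, hPQ.symm]
        · rcases eq_or_ne j 1 with hj1 | hj1
          · omega
          · simp [Nat.pos_iff_ne_zero.mp hj, hj1]
      · simp [Nat.pos_iff_ne_zero.mp hi, hi1]
  have hU : (⋃ n, A n) = P ∪ Q := by
    apply Set.eq_of_subset_of_subset
    · refine Set.iUnion_subset (fun n => ?_)
      simp only [hA]; split
      · exact Set.subset_union_left
      · split
        · exact Set.subset_union_right
        · simp
    · intro z hz
      rcases hz with hz | hz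
      · exact Set.mem_iUnion.2 ⟨0, by simp [hA, hz]⟩
      · exact Set.mem_iUnion.2 ⟨1, by simp [hA, hz]⟩
  have h := hμ.1 A hAm hAd x
  rw [hU] at h
  have hconst : ∀ N, 2 ≤ N → ∑ n ∈ Finset.range N, μ (A n) x = μ P x + μ Q x := by
    intro N hN
    have hsub : Finset.range 2 ⊆ Finset.range N := Finset.range_subset_range.2 hN
    have hzero : ∀ n ∈ Finset.range N, n ∉ Finset.range 2 → μ (A n) x = 0 := by
      intro n _ hn2
      have hn : ¬ (n = 0) ∧ ¬ (n = 1) := by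
        constructor <;> (intro hc; apply hn2; simp [hc])
      have : A n = ∅ := by simp [hA, hn.1, hn.2]
      rw [this]; exact mu_empty hμ x
    rw [← Finset.sum_subset hsub hzero]
    simp [Finset.sum_range_succ, hA]
  have : Tendsto (fun _ : ℕ => μ P x + μ Q x) atTop (𝓝 (μ (P ∪ Q) x)) := by
    apply h.congr'
    filter_upwards [eventually_ge_atTop 2] with N hN
    exact (hconst N hN)
  exact (tendsto_nhds_unique tendsto_const_nhds this).symm

end basics


end BWCaux

namespace BWCaux

variable {Z E F : Type*} [MeasurableSpace Z]
    [NormedAddCommGroup E] [NormedSpace ℝ E]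
    [NormedAddCommGroup F] [NormedSpace ℝ F]
    {μ : Set Z → E →L[ℝ] F} (hμ : IsIMeasure μ) (φ : StrongDual ℝ F)

lemma exists_good_x (A : Set Z) {ε : ℝ} (hε : 0 < ε) :
    ∃ x : E, ‖x‖ ≤ 1 ∧ sig μ φ A - ε ≤ φ (μ A x) := by
  by_cases h : sig μ φ A ≤ ε
  · exact ⟨0, by simp, by simp [sub_nonpos.2 h]⟩
  · push_neg at h
    by_contra hc
    push_neg at hc
    have hb : ∀ x : E, |φ (μ A x)| ≤ (sig μ φ A - ε) * ‖x‖ := by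
      intro x
      rcases eq_or_ne x 0 with rfl | hx
      · simp
      · have hxn : (0:ℝ) < ‖x‖ := norm_pos_iff.2 hx
        set u := ‖x‖⁻¹ • x with hu
        have hun : ‖u‖ ≤ 1 := by
          rw [hu, norm_smul, norm_inv, norm_norm]
          rw [inv_mul_cancel₀ hxn.ne']
        have h1 : φ (μ A u) < sig μ φ A - ε := hc u hun
        have h2 : φ (μ A (-u)) < sig μ φ A - ε := hc (-u) (by simpa using hun)
        have h2' : -φ (μ A u) < sig μ φ A - ε := by simpa using h2
        have habs : |φ (μ A u)| ≤ sig μ φ A - ε := by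
          rw [abs_le]; constructor <;> linarith
        have : φ (μ A u) = ‖x‖⁻¹ * φ (μ A x) := by simp [hu]
        rw [this] at habs
        rw [abs_mul, abs_of_nonneg (inv_nonneg.2 hxn.le)] at habs
        calc |φ (μ A x)| = ‖x‖ * (‖x‖⁻¹ * |φ (μ A x)|) := by field_simp
        _ ≤ ‖x‖ * (sig μ φ A - ε) := by
            exact mul_le_mul_of_nonneg_left habs hxn.le
        _ = (sig μ φ A - ε) * ‖x‖ := mul_comm _ _
    have : sig μ φ A ≤ sig μ φ A - ε := by
      apply ContinuousLinearMap.opNorm_le_bound _ (by linarith [sig_nonneg μ φ A])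
      intro x
      simpa [nuL, Real.norm_eq_abs] using hb x
    linarith

include hμ

/-- (P2): along any disjoint measurable family, the `sig`s are summable with finite sum. -/
lemma sig_finsum_bound (B : ℕ → Set Z) (hm : ∀ n, MeasurableSet (B n))
    (hd : Pairwise (Function.onFun Disjoint B)) :
    ∃ R : ℝ, ∀ s : Finset ℕ, ∑ i ∈ s, sig μ φ (B i) ≤ R := by
  have hx : ∀ n : ℕ, ∃ x : E, ‖x‖ ≤ 1 ∧ sig μ φ (B n) - (1/2)^n ≤ φ (μ (B n) x) := by
    intro n
    exact exists_good_x φ (B n) (by positivity)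
  choose x hx1 hx2 using hx
  obtain ⟨yy, hy⟩ := hμ.2 B hm hd x ⟨1, hx1⟩
  have hφ : Tendsto (fun N => ∑ n ∈ Finset.range N, φ (μ (B n) (x n))) atTop (𝓝 (φ yy)) := by
    have h2 := (φ.continuous.tendsto yy).comp hy
    have : (⇑φ ∘ fun N => ∑ n ∈ Finset.range N, (μ (B n)) (x n)) =
        fun N => ∑ n ∈ Finset.range N, φ ((μ (B n)) (x n)) := by
      funext N; simp [map_sum]
    rwa [this] at h2
  obtain ⟨M, hM⟩ := hφ.bddAbove_range
  refine ⟨M + 2, fun s => ?_⟩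
  obtain ⟨N, hN⟩ := s.exists_nat_subset_range
  calc ∑ i ∈ s, sig μ φ (B i) ≤ ∑ i ∈ Finset.range N, sig μ φ (B i) :=
        Finset.sum_le_sum_of_subset_of_nonneg hN (fun i _ _ => sig_nonneg μ φ (B i))
  _ ≤ ∑ i ∈ Finset.range N, (φ (μ (B i) (x i)) + (1/2)^i) := by
        apply Finset.sum_le_sum; intro i _; linarith [hx2 i]
  _ = (∑ i ∈ Finset.range N, φ (μ (B i) (x i))) + ∑ i ∈ Finset.range N, (1/2:ℝ)^i := by
        rw [Finset.sum_add_distrib]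
  _ ≤ M + 2 := by
        have h1 : (∑ i ∈ Finset.range N, φ (μ (B i) (x i))) ≤ M :=
          hM (Set.mem_range_self N)
        have h2 : ∑ i ∈ Finset.range N, (1/2:ℝ)^i ≤ 2 := by
          have := sum_geometric_two_le N
          simpa using this
        linarith

end BWCaux

namespace BWCaux

variable {Z E F : Type*} [MeasurableSpace Z]
    [NormedAddCommGroup E] [NormedSpace ℝ E]
    [NormedAddCommGroup F] [NormedSpace ℝ F]
    {μ : Set Z → E →L[ℝ] F} (hμ : IsIMeasure μ) (φ : StrongDual ℝ F)

/-- boundedness of finite-partition `sig` sums inside `A`. -/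
def SmallOn (μ : Set Z → E →L[ℝ] F) (φ : StrongDual ℝ F) (A : Set Z) : Prop :=
  ∃ R : ℝ, ∀ (N : ℕ) (B : ℕ → Set Z), (∀ n, MeasurableSet (B n)) → (∀ n, B n ⊆ A) →
    Pairwise (Function.onFun Disjoint B) → ∑ n ∈ Finset.range N, sig μ φ (B n) ≤ R

lemma smallOn_anti {A A' : Set Z} (hAA : A ⊆ A') (h : SmallOn μ φ A') : SmallOn μ φ A := by
  obtain ⟨R, hR⟩ := h
  exact ⟨R, fun N B hm hs hd => hR N B hm (fun n => (hs n).trans hAA) hd⟩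

include hμ

lemma nuL_add_of_disjoint {P Q : Set Z} (hP : MeasurableSet P) (hQ : MeasurableSet Q)
    (hPQ : Disjoint P Q) : nuL μ φ (P ∪ Q) = nuL μ φ P + nuL μ φ Q := by
  apply ContinuousLinearMap.ext
  intro x
  simp [nuL, mu_union hμ hP hQ hPQ x]

lemma sig_split {B D : Set Z} (hB : MeasurableSet B) (hD : MeasurableSet D) :
    sig μ φ B ≤ sig μ φ (B ∩ D) + sig μ φ (B \ D) := by
  have h1 : B = (B ∩ D) ∪ (B \ D) := by
    ext z; by_cases hz : z ∈ D <;> simp [hz]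
  have h2 : nuL μ φ ((B ∩ D) ∪ (B \ D)) = nuL μ φ (B ∩ D) + nuL μ φ (B \ D) :=
    nuL_add_of_disjoint hμ φ (hB.inter hD) (hB.diff hD)
      (Set.disjoint_left.2 (fun z hz1 hz2 => hz2.2 hz1.2))
  have h3 : sig μ φ B = ‖nuL μ φ (B ∩ D) + nuL μ φ (B \ D)‖ := by
    rw [sig]
    nth_rewrite 1 [h1]
    rw [h2]
  rw [h3]
  exact norm_add_le _ _

lemma smallOn_split {A D : Set Z} (hD : MeasurableSet D)
    (hBmeas : ∀ (n : ℕ) (B : ℕ → Set Z), True) -- dummy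
    (h1 : SmallOn μ φ (A ∩ D)) (h2 : SmallOn μ φ (A \ D)) : SmallOn μ φ A := by
  obtain ⟨R1, hR1⟩ := h1
  obtain ⟨R2, hR2⟩ := h2
  refine ⟨R1 + R2, fun N B hm hs hd => ?_⟩
  have key : ∀ n ∈ Finset.range N, sig μ φ (B n) ≤ sig μ φ (B n ∩ D) + sig μ φ (B n \ D) :=
    fun n _ => sig_split hμ φ (hm n) hD
  calc ∑ n ∈ Finset.range N, sig μ φ (B n)
      ≤ ∑ n ∈ Finset.range N, (sig μ φ (B n ∩ D) + sig μ φ (B n \ D)) :=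
        Finset.sum_le_sum key
  _ = (∑ n ∈ Finset.range N, sig μ φ (B n ∩ D)) + ∑ n ∈ Finset.range N, sig μ φ (B n \ D) :=
        Finset.sum_add_distrib
  _ ≤ R1 + R2 := by
      have e1 := hR1 N (fun n => B n ∩ D) (fun n => (hm n).inter hD)
        (fun n => Set.inter_subset_inter_left D (hs n))
        (fun i j hij => (hd hij).mono Set.inter_subset_left Set.inter_subset_left)
      have e2 := hR2 N (fun n => B n \ D) (fun n => (hm n).diff hD)
        (fun n => Set.diff_subset_diff_left (hs n))
        (fun i j hij => (hd hij).mono Set.diff_subset Set.diff_subset)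
      linarith

lemma smallOn_empty : SmallOn μ φ (∅ : Set Z) := by
  refine ⟨0, fun N B hm hs hd => ?_⟩
  have : ∀ n ∈ Finset.range N, sig μ φ (B n) = 0 := by
    intro n _
    have hBn : B n = ∅ := Set.subset_empty_iff.1 (hs n)
    have : nuL μ φ (B n) = 0 := by
      apply ContinuousLinearMap.ext; intro x
      simp [nuL, hBn, mu_empty hμ x]
    simp [sig, this]
  rw [Finset.sum_congr rfl this]
  simp

lemma smallOn_union {X Y : Set Z} (hX : MeasurableSet X)
    (h1 : SmallOn μ φ X) (h2 : SmallOn μ φ Y) : SmallOn μ φ (X ∪ Y) := by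
  apply smallOn_split hμ φ hX (fun _ _ => trivial)
  · exact smallOn_anti φ Set.inter_subset_right h1
  · exact smallOn_anti φ (fun z hz => hz.1.elim (fun h => absurd h hz.2) id) h2

lemma smallOn_biUnion (N : ℕ) (B : ℕ → Set Z) (hm : ∀ n, MeasurableSet (B n))
    (h : ∀ i < N, SmallOn μ φ (B i)) : SmallOn μ φ (⋃ i ∈ Finset.range N, B i) := by
  induction N with
  | zero => simpa using smallOn_empty hμ φ
  | succ N ih =>
      have : (⋃ i ∈ Finset.range (N+1), B i) = B N ∪ ⋃ i ∈ Finset.range N, B i := by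
        rw [Finset.range_add_one, Finset.set_biUnion_insert]
      rw [this]
      exact smallOn_union hμ φ (hm N) (h N (by omega)) (ih (fun i hi => h i (by omega)))

omit hμ in
lemma exists_big_family {H : Set Z} (hsm : ¬ SmallOn μ φ H) (R : ℝ) :
    ∃ (N : ℕ) (B : ℕ → Set Z), (∀ n, MeasurableSet (B n)) ∧ (∀ n, B n ⊆ H) ∧
      Pairwise (Function.onFun Disjoint B) ∧ R < ∑ n ∈ Finset.range N, sig μ φ (B n) := by
  rw [SmallOn] at hsm
  push_neg at hsm
  obtain ⟨N, B, hm, hs, hd, hlt⟩ := hsm R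
  exact ⟨N, B, hm, hs, hd, hlt⟩

/-- Main gliding-hump step. -/
lemma f3step {H : Set Z} (hH : MeasurableSet H) (hsm : ¬ SmallOn μ φ H) :
    ∃ H', MeasurableSet H' ∧ H' ⊆ H ∧ ¬ SmallOn μ φ H' ∧
      ∃ (N : ℕ) (B : ℕ → Set Z), (∀ n, MeasurableSet (B n)) ∧ (∀ n, B n ⊆ H \ H') ∧
        Pairwise (Function.onFun Disjoint B) ∧
        ((1:ℝ) ≤ ∑ n ∈ Finset.range N, sig μ φ (B n) ∨ sig μ φ H + 1 ≤ sig μ φ H') := by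
  classical
  obtain ⟨N, B, hm, hs, hd, hbig⟩ := exists_big_family φ hsm (sig μ φ H + 2)
  set D : Set Z := ⋃ i ∈ Finset.range N, B i with hDdef
  have hDm : MeasurableSet D := by
    apply MeasurableSet.biUnion (Set.to_countable _) (fun i _ => hm i)
  have hDH : D ⊆ H := by
    apply Set.iUnion₂_subset; intro i _; exact hs i
  by_cases hsd : SmallOn μ φ (H \ D)
  · -- D not small, find bad i*
    have hDnot : ¬ SmallOn μ φ D := by
      intro hc
      apply hsm
      apply smallOn_split hμ φ hDm (fun _ _ => trivial)
      · exact smallOn_anti φ Set.inter_subset_right hc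
      · exact hsd
    have : ∃ i < N, ¬ SmallOn μ φ (B i) := by
      by_contra hc
      push_neg at hc
      exact hDnot (smallOn_biUnion hμ φ N B hm hc)
    obtain ⟨i0, hi0N, hi0⟩ := this
    set B' : ℕ → Set Z := fun n => if n = i0 then ∅ else B n with hB'
    have hB'm : ∀ n, MeasurableSet (B' n) := by
      intro n; simp only [hB']; split <;> [exact MeasurableSet.empty; exact hm n]
    have hB'sub : ∀ n, B' n ⊆ H \ B i0 := by
      intro n z hz
      simp only [hB'] at hz
      split_ifs at hz with hn
      · exact absurd hz (Set.notMem_empty z)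
      · refine ⟨hs n hz, fun hzi => ?_⟩
        exact Set.disjoint_left.1 (hd hn) hz hzi
    have hB'd : Pairwise (Function.onFun Disjoint B') := by
      intro i j hij
      simp only [Function.onFun, hB']
      split_ifs <;> simp_all [Function.onFun]
      · exact hd hij
    have hsum : ∑ n ∈ Finset.range N, sig μ φ (B n) =
        sig μ φ (B i0) + ∑ n ∈ Finset.range N, sig μ φ (B' n) := by
      have h0 : sig μ φ (B' i0) = 0 := by
        have : B' i0 = ∅ := by simp [hB']
        rw [this, sig]
        have : nuL μ φ (∅ : Set Z) = 0 := by
          apply ContinuousLinearMap.ext; intro x; simp [nuL, mu_empty hμ x]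
        simp [this]
      have hmem : i0 ∈ Finset.range N := Finset.mem_range.2 hi0N
      rw [← Finset.add_sum_erase _ _ hmem, ← Finset.add_sum_erase _ (fun n => sig μ φ (B' n)) hmem, h0]
      rw [zero_add]
      congr 1
      apply Finset.sum_congr rfl
      intro n hn
      have : n ≠ i0 := (Finset.mem_erase.1 hn).1
      simp [hB', this]
    by_cases hrest : (1:ℝ) ≤ ∑ n ∈ Finset.range N, sig μ φ (B' n)
    · exact ⟨B i0, hm i0, hs i0, hi0, N, B', hB'm, hB'sub, hB'd, Or.inl hrest⟩
    · push_neg at hrest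
      refine ⟨B i0, hm i0, hs i0, hi0, 0, fun _ => ∅, fun _ => MeasurableSet.empty,
        fun _ => Set.empty_subset _, by intro i j hij; simp [Function.onFun], Or.inr ?_⟩
      have : sig μ φ H + 2 < sig μ φ (B i0) + 1 := by
        rw [hsum] at hbig; linarith
      linarith
  · -- complement not small
    set B2 : ℕ → Set Z := fun n => if n < N then B n else ∅ with hB2
    have hB2m : ∀ n, MeasurableSet (B2 n) := by
      intro n; simp only [hB2]; split <;> [exact hm n; exact MeasurableSet.empty]
    have hB2d : Pairwise (Function.onFun Disjoint B2) := by
      intro i j hij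
      simp only [Function.onFun, hB2]
      split_ifs
      · exact hd hij
      · exact Set.disjoint_empty _
      · exact (Set.disjoint_empty _).symm
      · exact Set.disjoint_empty _
    have hsum2 : ∑ n ∈ Finset.range N, sig μ φ (B2 n) = ∑ n ∈ Finset.range N, sig μ φ (B n) := by
      apply Finset.sum_congr rfl
      intro n hn
      simp [hB2, Finset.mem_range.1 hn]
    refine ⟨H \ D, hH.diff hDm, Set.diff_subset, hsd, N, B2, hB2m, ?_, hB2d, Or.inl ?_⟩
    · intro n z hz
      simp only [hB2] at hz
      split_ifs at hz with hn
      · refine ⟨hs n hz, fun hzd => hzd.2 (Set.mem_biUnion (Finset.mem_range.2 hn) hz)⟩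
      · exact absurd hz (Set.notMem_empty z)
    · rw [hsum2]
      have := sig_nonneg μ φ H
      linarith

end BWCaux

namespace BWCaux

variable {Z E F : Type*} [MeasurableSpace Z]
    [NormedAddCommGroup E] [NormedSpace ℝ E]
    [NormedAddCommGroup F] [NormedSpace ℝ F]
    {μ : Set Z → E →L[ℝ] F} (hμ : IsIMeasure μ) (φ : StrongDual ℝ F)

include hμ

lemma sig_succ_le {P Q : Set Z} (hP : MeasurableSet P) (hQ : MeasurableSet Q)
    (hQP : Q ⊆ P) : sig μ φ Q ≤ sig μ φ P + sig μ φ (P \ Q) := by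
  have h1 : P = Q ∪ (P \ Q) := by
    ext z; constructor
    · intro hz; by_cases hzq : z ∈ Q
      · exact Or.inl hzq
      · exact Or.inr ⟨hz, hzq⟩
    · rintro (hz | hz); exacts [hQP hz, hz.1]
  have h2 : nuL μ φ (Q ∪ (P \ Q)) = nuL μ φ Q + nuL μ φ (P \ Q) :=
    nuL_add_of_disjoint hμ φ hQ (hP.diff hQ)
      (Set.disjoint_left.2 fun z hz1 hz2 => hz2.2 hz1)
  have h3 : nuL μ φ Q = nuL μ φ P - nuL μ φ (P \ Q) := by
    have : nuL μ φ P = nuL μ φ Q + nuL μ φ (P \ Q) := by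
      nth_rewrite 1 [h1]; exact h2
    rw [this]; abel
  calc sig μ φ Q = ‖nuL μ φ P - nuL μ φ (P \ Q)‖ := by rw [sig, h3]
  _ ≤ sig μ φ P + sig μ φ (P \ Q) := norm_sub_le _ _

theorem smallOn_univ : SmallOn μ φ (Set.univ : Set Z) := by
  classical
  by_contra hns
  -- choice data from f3step
  let T := {H : Set Z // MeasurableSet H ∧ ¬ SmallOn μ φ H}
  have hstep := fun (p : T) => f3step hμ φ p.2.1 p.2.2
  choose H' hm' hsub' hns' Nf Bf hBm hBsub hBd hOr using hstep
  let next : T → T := fun p => ⟨H' p, hm' p, hns' p⟩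
  let seq : ℕ → T := fun k => next^[k] ⟨Set.univ, MeasurableSet.univ, hns⟩
  have hseq_succ : ∀ k, seq (k+1) = next (seq k) := by
    intro k
    simp only [seq, Function.iterate_succ_apply']
  let HH : ℕ → Set Z := fun k => (seq k).1
  have HHm : ∀ k, MeasurableSet (HH k) := fun k => (seq k).2.1
  have HHns : ∀ k, ¬ SmallOn μ φ (HH k) := fun k => (seq k).2.2
  have HHsub : ∀ k, HH (k+1) ⊆ HH k := by
    intro k
    have : HH (k+1) = H' (seq k) := by rw [show HH (k+1) = (seq (k+1)).1 from rfl, hseq_succ]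
    rw [this]; exact hsub' (seq k)
  have HHanti : ∀ {j k : ℕ}, j ≤ k → HH k ⊆ HH j := by
    intro j k hjk
    induction k with
    | zero => have : j = 0 := by omega
              subst this; exact subset_rfl
    | succ k ih =>
        rcases Nat.lt_or_ge j (k+1) with h | h
        · exact (HHsub k).trans (ih (by omega))
        · have : j = k+1 := by omega
          subst this; exact subset_rfl
  -- family data at stage k
  let NN : ℕ → ℕ := fun k => Nf (seq k)
  let BB0 : ℕ → ℕ → Set Z := fun k => Bf (seq k)
  have hBB0m : ∀ k n, MeasurableSet (BB0 k n) := fun k n => hBm (seq k) n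
  have hBB0sub : ∀ k n, BB0 k n ⊆ HH k \ HH (k+1) := by
    intro k n
    have h1 := hBsub (seq k) n
    have : HH (k+1) = H' (seq k) := by rw [show HH (k+1) = (seq (k+1)).1 from rfl, hseq_succ]
    rw [this]; exact h1
  have hBB0d : ∀ k, Pairwise (Function.onFun Disjoint (BB0 k)) := fun k => hBd (seq k)
  have hOr' : ∀ k, (1:ℝ) ≤ ∑ n ∈ Finset.range (NN k), sig μ φ (BB0 k n) ∨
      sig μ φ (HH k) + 1 ≤ sig μ φ (HH (k+1)) := by
    intro k
    have h := hOr (seq k)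
    have hH' : HH (k+1) = H' (seq k) := by rw [show HH (k+1) = (seq (k+1)).1 from rfl, hseq_succ]
    rcases h with h | h
    · exact Or.inl h
    · exact Or.inr (by rw [hH']; exact h)
  -- cross-stage disjointness helper
  have cross : ∀ {k k' : ℕ}, k < k' → ∀ {S S' : Set Z}, S ⊆ HH k \ HH (k+1) →
      S' ⊆ HH k' → Disjoint S S' := by
    intro k k' hkk' S S' hS hS'
    refine Set.disjoint_left.2 (fun z hz1 hz2 => ?_)
    have h1 : z ∉ HH (k+1) := (hS hz1).2
    have h2 : z ∈ HH (k+1) := HHanti (by omega) (hS' hz2)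
    exact h1 h2
  set aset : Set ℕ := {k | (1:ℝ) ≤ ∑ n ∈ Finset.range (NN k), sig μ φ (BB0 k n)} with haset
  by_cases hinf : aset.Infinite
  · -- flatten the infinitely many unit-mass families
    set idx : ℕ → ℕ := Nat.nth (· ∈ aset) with hidx
    have hidxmem : ∀ l, idx l ∈ aset := fun l => Nat.nth_mem_of_infinite hinf l
    have hidxmono : StrictMono idx := Nat.nth_strictMono hinf
    set BB : ℕ → Set Z := fun m =>
      if (Nat.unpair m).2 < NN (idx (Nat.unpair m).1)
      then BB0 (idx (Nat.unpair m).1) (Nat.unpair m).2 else ∅ with hBB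
    have hBBm : ∀ m, MeasurableSet (BB m) := by
      intro m; simp only [hBB]; split <;> [exact hBB0m _ _; exact MeasurableSet.empty]
    have hBBd : Pairwise (Function.onFun Disjoint BB) := by
      intro i j hij
      simp only [Function.onFun, hBB]
      split_ifs with h1 h2 h2
      · -- both real sets
        rcases Nat.lt_trichotomy (Nat.unpair i).1 (Nat.unpair j).1 with hl | hl | hl
        · exact cross (hidxmono hl) (hBB0sub _ _) ((hBB0sub _ _).trans Set.diff_subset)
        · have hne : (Nat.unpair i).2 ≠ (Nat.unpair j).2 := by
            intro hc
            apply hij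
            have : Nat.unpair i = Nat.unpair j := Prod.ext hl hc
            have := congrArg (fun p : ℕ × ℕ => Nat.pair p.1 p.2) this
            simpa [Nat.pair_unpair] using this
          rw [hl]
          exact hBB0d (idx (Nat.unpair j).1) hne
        · exact (cross (hidxmono hl) (hBB0sub _ _) ((hBB0sub _ _).trans Set.diff_subset)).symm
      · exact Set.disjoint_empty _
      · exact (Set.disjoint_empty _).symm
      · exact Set.disjoint_empty _
    obtain ⟨R, hR⟩ := sig_finsum_bound hμ φ BB hBBm hBBd
    obtain ⟨L, hL⟩ := exists_nat_gt R
    set s : Finset ℕ := (Finset.range L).biUnion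
      (fun l => (Finset.range (NN (idx l))).image (fun a => Nat.pair l a)) with hs
    have hsum : (L : ℝ) ≤ ∑ i ∈ s, sig μ φ (BB i) := by
      rw [hs, Finset.sum_biUnion]
      · have hinner : ∀ l ∈ Finset.range L,
            (1:ℝ) ≤ ∑ i ∈ (Finset.range (NN (idx l))).image (fun a => Nat.pair l a),
              sig μ φ (BB i) := by
          intro l _
          have hinj : ∀ a ∈ Finset.range (NN (idx l)), ∀ b ∈ Finset.range (NN (idx l)),
              Nat.pair l a = Nat.pair l b → a = b := by
            intro a _ b _ hab
            have h2 := congrArg Nat.unpair hab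
            simpa [Nat.unpair_pair] using h2
          rw [Finset.sum_image hinj]
          have : ∀ a ∈ Finset.range (NN (idx l)), sig μ φ (BB (Nat.pair l a)) =
              sig μ φ (BB0 (idx l) a) := by
            intro a ha
            simp only [hBB, Nat.unpair_pair]
            rw [if_pos (Finset.mem_range.1 ha)]
          rw [Finset.sum_congr rfl this]
          exact hidxmem l
        calc (L:ℝ) = ∑ _l ∈ Finset.range L, (1:ℝ) := by simp
        _ ≤ _ := Finset.sum_le_sum hinner
      · -- pairwise disjoint images
        intro a ha b hb hab
        simp only [Finset.disjoint_left]
        intro i hia hib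
        simp only [Finset.mem_coe, Finset.mem_image] at hia hib
        obtain ⟨x1, _, hx1⟩ := hia
        obtain ⟨x2, _, hx2⟩ := hib
        apply hab
        have h5 := hx1.trans hx2.symm
        have h6 := congrArg Nat.unpair h5
        simp only [Nat.unpair_pair, Prod.mk.injEq] at h6
        exact h6.1
    have := hR s
    have : (L:ℝ) ≤ R := le_trans hsum this
    linarith
  · -- eventually only sig-increments
    have hfin : aset.Finite := Set.not_infinite.1 hinf
    obtain ⟨K, hK⟩ := hfin.bddAbove
    have incr : ∀ k, K < k → sig μ φ (HH k) + 1 ≤ sig μ φ (HH (k+1)) := by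
      intro k hk
      rcases hOr' k with h | h
      · exact absurd (hK h) (by omega)
      · exact h
    have grow : ∀ j : ℕ, sig μ φ (HH (K+1)) + j ≤ sig μ φ (HH (K+1+j)) := by
      intro j
      induction j with
      | zero => simp
      | succ j ih =>
          have h1 := incr (K+1+j) (by omega)
          have : K+1+(j+1) = (K+1+j)+1 := by omega
          rw [this]
          push_cast
          push_cast at ih
          linarith
    -- upper bound via disjoint differences
    set DD : ℕ → Set Z := fun k => HH k \ HH (k+1) with hDD
    have hDDm : ∀ k, MeasurableSet (DD k) := fun k => (HHm k).diff (HHm (k+1))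
    have hDDd : Pairwise (Function.onFun Disjoint DD) := by
      intro i j hij
      rcases Nat.lt_or_ge i j with h | h
      · exact cross h subset_rfl Set.diff_subset
      · have : j < i := by omega
        exact (cross this subset_rfl Set.diff_subset).symm
    obtain ⟨R', hR'⟩ := sig_finsum_bound hμ φ DD hDDm hDDd
    have bound : ∀ m, sig μ φ (HH m) ≤ sig μ φ (HH 0) + ∑ k ∈ Finset.range m, sig μ φ (DD k) := by
      intro m
      induction m with
      | zero => simp
      | succ m ih =>
          have h1 : sig μ φ (HH (m+1)) ≤ sig μ φ (HH m) + sig μ φ (DD m) :=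
            sig_succ_le hμ φ (HHm m) (HHm (m+1)) (HHsub m)
          rw [Finset.sum_range_succ]
          linarith
    obtain ⟨j, hj⟩ := exists_nat_gt (sig μ φ (HH 0) + R' - sig μ φ (HH (K+1)))
    have h1 := grow j
    have h2 := bound (K+1+j)
    have h3 := hR' (Finset.range (K+1+j))
    linarith

end BWCaux

namespace BWCaux

variable {Z E F : Type*} [MeasurableSpace Z]
    [NormedAddCommGroup E] [NormedSpace ℝ E]
    [NormedAddCommGroup F] [NormedSpace ℝ F]

/-- finite disjoint measurable families inside `A` -/
def Fam (Z : Type*) [MeasurableSpace Z] (A : Set Z) : Type _ :=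
  {p : ℕ × (ℕ → Set Z) // (∀ n, MeasurableSet (p.2 n)) ∧ (∀ n, p.2 n ⊆ A) ∧
    Pairwise (Function.onFun Disjoint p.2)}

instance (A : Set Z) : Nonempty (Fam Z A) :=
  ⟨⟨(0, fun _ => ∅), fun _ => MeasurableSet.empty, fun _ => Set.empty_subset _,
    fun i j _ => Set.disjoint_empty _⟩⟩

noncomputable def famSum (μ : Set Z → E →L[ℝ] F) (φ : StrongDual ℝ F)
    {A : Set Z} (p : Fam Z A) : ℝ :=
  ∑ n ∈ Finset.range p.1.1, sig μ φ (p.1.2 n)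

lemma famSum_nonneg (μ : Set Z → E →L[ℝ] F) (φ : StrongDual ℝ F)
    {A : Set Z} (p : Fam Z A) : 0 ≤ famSum μ φ p :=
  Finset.sum_nonneg (fun n _ => sig_nonneg μ φ _)

noncomputable def tau0 (μ : Set Z → E →L[ℝ] F) (φ : StrongDual ℝ F) (A : Set Z) :
    ℝ≥0∞ :=
  ⨆ p : Fam Z A, ENNReal.ofReal (famSum μ φ p)

variable {μ : Set Z → E →L[ℝ] F} (hμ : IsIMeasure μ) (φ : StrongDual ℝ F)

lemma tau0_mono {A A' : Set Z} (h : A ⊆ A') : tau0 μ φ A ≤ tau0 μ φ A' := by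
  apply iSup_le
  intro p
  exact le_iSup_of_le ⟨p.1, p.2.1, fun n => (p.2.2.1 n).trans h, p.2.2.2⟩ le_rfl

include hμ

lemma sig_empty : sig μ φ (∅ : Set Z) = 0 := by
  have : nuL μ φ (∅ : Set Z) = 0 := by
    apply ContinuousLinearMap.ext; intro x; simp [nuL, mu_empty hμ x]
  simp [sig, this]

lemma tau0_empty : tau0 μ φ (∅ : Set Z) = 0 := by
  apply le_antisymm _ zero_le
  apply iSup_le
  intro p
  have : famSum μ φ p = 0 := by
    apply Finset.sum_eq_zero
    intro n _
    have : p.1.2 n = ∅ := Set.subset_empty_iff.1 (p.2.2.1 n)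
    rw [this, sig_empty hμ φ]
  simp [this]

lemma le_tau0 {A : Set Z} (hA : MeasurableSet A) :
    ENNReal.ofReal (sig μ φ A) ≤ tau0 μ φ A := by
  classical
  refine le_iSup_of_le ⟨(1, fun n => if n = 0 then A else ∅), ?_, ?_, ?_⟩ ?_
  · intro n; dsimp only; split <;> [exact hA; exact MeasurableSet.empty]
  · intro n; dsimp only; split <;> [exact subset_rfl; exact Set.empty_subset _]
  · intro i j hij
    simp only [Function.onFun]
    split_ifs with h1 h2 h2
    · omega
    · exact Set.disjoint_empty _
    · exact (Set.disjoint_empty _).symm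
    · exact Set.disjoint_empty _
  · simp [famSum]

lemma summable_sig (B : ℕ → Set Z) (hm : ∀ n, MeasurableSet (B n))
    (hd : Pairwise (Function.onFun Disjoint B)) : Summable (fun n => sig μ φ (B n)) := by
  obtain ⟨R, hR⟩ := sig_finsum_bound hμ φ B hm hd
  apply summable_of_sum_range_le (fun n => sig_nonneg μ φ (B n))
  intro n
  exact hR (Finset.range n)

lemma nu_hasSum {B : ℕ → Set Z} (hm : ∀ n, MeasurableSet (B n))
    (hd : Pairwise (Function.onFun Disjoint B)) (x : E) :
    HasSum (fun n => φ (μ (B n) x)) (φ (μ (⋃ n, B n) x)) := by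
  have htend : Tendsto (fun N => ∑ n ∈ Finset.range N, φ (μ (B n) x)) atTop
      (𝓝 (φ (μ (⋃ n, B n) x))) := by
    have h2 := (φ.continuous.tendsto _).comp (hμ.1 B hm hd x)
    have : (⇑φ ∘ fun N => ∑ n ∈ Finset.range N, (μ (B n)) x) =
        fun N => ∑ n ∈ Finset.range N, φ ((μ (B n)) x) := by
      funext N; simp [map_sum]
    rwa [this] at h2
  have hsummable : Summable (fun n => φ (μ (B n) x)) := by
    apply Summable.of_norm_bounded ((summable_sig hμ φ B hm hd).mul_right ‖x‖)
    intro n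
    simpa [Real.norm_eq_abs] using abs_nu_le μ φ (B n) x
  have := hsummable.hasSum
  rwa [tendsto_nhds_unique (hsummable.hasSum.tendsto_sum_nat) htend] at this

lemma sig_le_tsum {B : Set Z} (hB : MeasurableSet B) (C : ℕ → Set Z)
    (hCm : ∀ n, MeasurableSet (C n)) (hCd : Pairwise (Function.onFun Disjoint C))
    (hBC : B ⊆ ⋃ n, C n) :
    sig μ φ B ≤ ∑' m, sig μ φ (B ∩ C m) := by
  have hm : ∀ n, MeasurableSet (B ∩ C n) := fun n => hB.inter (hCm n)
  have hd : Pairwise (Function.onFun Disjoint (fun n => B ∩ C n)) :=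
    fun i j hij => ((hCd hij).mono Set.inter_subset_right Set.inter_subset_right)
  have hU : (⋃ n, B ∩ C n) = B := by
    rw [← Set.inter_iUnion]
    exact Set.inter_eq_self_of_subset_left hBC
  have hsum : Summable (fun m => sig μ φ (B ∩ C m)) := summable_sig hμ φ _ hm hd
  apply ContinuousLinearMap.opNorm_le_bound _ (tsum_nonneg (fun m => sig_nonneg μ φ _))
  intro x
  have h1 : HasSum (fun m => φ (μ (B ∩ C m) x)) (φ (μ B x)) := by
    have := nu_hasSum hμ φ hm hd x
    rwa [hU] at this
  have h2 : Summable (fun m => φ (μ (B ∩ C m) x)) := h1.summable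
  calc ‖(nuL μ φ B) x‖ = ‖∑' m, φ (μ (B ∩ C m) x)‖ := by rw [h1.tsum_eq]; rfl
  _ ≤ ∑' m, ‖φ (μ (B ∩ C m) x)‖ := norm_tsum_le_tsum_norm (by simpa using h2.abs)
  _ ≤ ∑' m, sig μ φ (B ∩ C m) * ‖x‖ := by
      apply Summable.tsum_le_tsum _ (by simpa using h2.abs) (hsum.mul_right ‖x‖)
      intro m
      simpa [Real.norm_eq_abs] using abs_nu_le μ φ (B ∩ C m) x
  _ = (∑' m, sig μ φ (B ∩ C m)) * ‖x‖ := by rw [tsum_mul_right]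

lemma tau0_add_le {X Y : Set Z} (hXY : Disjoint X Y) :
    tau0 μ φ X + tau0 μ φ Y ≤ tau0 μ φ (X ∪ Y) := by
  classical
  simp only [tau0]
  rw [ENNReal.iSup_add]
  apply iSup_le
  intro p
  rw [ENNReal.add_iSup]
  apply iSup_le
  intro q
  obtain ⟨⟨N1, B1⟩, hB1m, hB1s, hB1d⟩ := p
  obtain ⟨⟨N2, B2⟩, hB2m, hB2s, hB2d⟩ := q
  set Bc : ℕ → Set Z := fun n => if n < N1 then B1 n else B2 (n - N1) with hBc
  have hBcm : ∀ n, MeasurableSet (Bc n) := by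
    intro n; simp only [hBc]; split <;> [exact hB1m n; exact hB2m _]
  have hBcs : ∀ n, Bc n ⊆ X ∪ Y := by
    intro n; simp only [hBc]; split
    · exact (hB1s n).trans Set.subset_union_left
    · exact (hB2s _).trans Set.subset_union_right
  have hBcd : Pairwise (Function.onFun Disjoint Bc) := by
    intro i j hij
    simp only [Function.onFun, hBc]
    split_ifs with h1 h2 h2
    · exact hB1d hij
    · exact hXY.mono (hB1s i) (hB2s _)
    · exact (hXY.mono (hB1s j) (hB2s _)).symm
    · exact hB2d (by omega)
  have hsum : famSum μ φ (⟨(N1 + N2, Bc), hBcm, hBcs, hBcd⟩ : Fam Z (X ∪ Y)) =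
      famSum μ φ (⟨(N1, B1), hB1m, hB1s, hB1d⟩ : Fam Z X) +
      famSum μ φ (⟨(N2, B2), hB2m, hB2s, hB2d⟩ : Fam Z Y) := by
    simp only [famSum]
    rw [Finset.sum_range_add]
    congr 1
    · apply Finset.sum_congr rfl
      intro n hn
      simp [hBc, Finset.mem_range.1 hn]
    · apply Finset.sum_congr rfl
      intro n _
      simp [hBc]
  have := le_iSup_of_le (f := fun p : Fam Z (X ∪ Y) => ENNReal.ofReal (famSum μ φ p))
    ⟨(N1 + N2, Bc), hBcm, hBcs, hBcd⟩ le_rfl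
  rw [hsum] at this
  exact (ENNReal.ofReal_add (famSum_nonneg μ φ (⟨(N1, B1), hB1m, hB1s, hB1d⟩ : Fam Z X))
    (famSum_nonneg μ φ (⟨(N2, B2), hB2m, hB2s, hB2d⟩ : Fam Z Y))).ge.trans this

end BWCaux

namespace BWCaux

variable {Z E F : Type*} [MeasurableSpace Z]
    [NormedAddCommGroup E] [NormedSpace ℝ E]
    [NormedAddCommGroup F] [NormedSpace ℝ F]
    {μ : Set Z → E →L[ℝ] F} (hμ : IsIMeasure μ) (φ : StrongDual ℝ F)

include hμ

lemma tau0_iUnion (C : ℕ → Set Z) (hCm : ∀ n, MeasurableSet (C n))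
    (hCd : Pairwise (Function.onFun Disjoint C)) :
    tau0 μ φ (⋃ n, C n) = ∑' n, tau0 μ φ (C n) := by
  apply le_antisymm
  · -- ≤ : split each family along the C's
    apply iSup_le
    intro p
    obtain ⟨⟨N, B⟩, hBm, hBs, hBd⟩ := p
    have key : ∀ n, ENNReal.ofReal (sig μ φ (B n)) ≤
        ∑' m, ENNReal.ofReal (sig μ φ (B n ∩ C m)) := by
      intro n
      have h1 := sig_le_tsum hμ φ (hBm n) C hCm hCd (hBs n)
      have hsum : Summable (fun m => sig μ φ (B n ∩ C m)) :=
        summable_sig hμ φ _ (fun m => (hBm n).inter (hCm m))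
          (fun i j hij => (hCd hij).mono Set.inter_subset_right Set.inter_subset_right)
      calc ENNReal.ofReal (sig μ φ (B n)) ≤ ENNReal.ofReal (∑' m, sig μ φ (B n ∩ C m)) :=
            ENNReal.ofReal_le_ofReal h1
      _ = _ := ENNReal.ofReal_tsum_of_nonneg (fun m => sig_nonneg μ φ _) hsum
    have step1 : ENNReal.ofReal (famSum μ φ (⟨(N, B), hBm, hBs, hBd⟩ : Fam Z (⋃ n, C n))) ≤
        ∑ n ∈ Finset.range N, ∑' m, ENNReal.ofReal (sig μ φ (B n ∩ C m)) := by
      calc ENNReal.ofReal (famSum μ φ _) = ∑ n ∈ Finset.range N, ENNReal.ofReal (sig μ φ (B n)) := by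
            show ENNReal.ofReal (∑ n ∈ Finset.range N, sig μ φ (B n)) = _
            rw [ENNReal.ofReal_sum_of_nonneg (fun n _ => sig_nonneg μ φ _)]
      _ ≤ _ := Finset.sum_le_sum (fun n _ => key n)
    have step2 : ∑ n ∈ Finset.range N, ∑' m, ENNReal.ofReal (sig μ φ (B n ∩ C m)) =
        ∑' m, ∑ n ∈ Finset.range N, ENNReal.ofReal (sig μ φ (B n ∩ C m)) :=
      (Summable.tsum_finsetSum (fun n _ => ENNReal.summable)).symm
    have step3 : ∀ m, ∑ n ∈ Finset.range N, ENNReal.ofReal (sig μ φ (B n ∩ C m)) ≤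
        tau0 μ φ (C m) := by
      intro m
      have : (∑ n ∈ Finset.range N, ENNReal.ofReal (sig μ φ (B n ∩ C m))) =
          ENNReal.ofReal (∑ n ∈ Finset.range N, sig μ φ (B n ∩ C m)) :=
        (ENNReal.ofReal_sum_of_nonneg (fun n _ => sig_nonneg μ φ _)).symm
      rw [this]
      refine le_iSup_of_le ⟨(N, fun n => B n ∩ C m), fun n => (hBm n).inter (hCm m),
        fun n => Set.inter_subset_right,
        fun i j hij => (hBd hij).mono Set.inter_subset_left Set.inter_subset_left⟩ ?_
      exact le_of_eq rfl
    calc ENNReal.ofReal (famSum μ φ _) ≤ _ := step1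
    _ = _ := step2
    _ ≤ ∑' m, tau0 μ φ (C m) := ENNReal.tsum_le_tsum step3
  · -- ≥ : superadditivity
    have claim : ∀ M : ℕ, ∑ m ∈ Finset.range M, tau0 μ φ (C m) ≤
        tau0 μ φ (⋃ m ∈ Finset.range M, C m) := by
      intro M
      induction M with
      | zero => simp
      | succ M ih =>
          have hdisj : Disjoint (⋃ m ∈ Finset.range M, C m) (C M) := by
            apply Set.disjoint_left.2
            intro z hz1 hz2
            obtain ⟨m, hm, hzm⟩ := Set.mem_iUnion₂.1 hz1
            exact Set.disjoint_left.1 (hCd (by simp at hm; omega : m ≠ M)) hzm hz2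
          have hset : (⋃ m ∈ Finset.range (M+1), C m) =
              (⋃ m ∈ Finset.range M, C m) ∪ C M := by
            rw [Finset.range_add_one, Finset.set_biUnion_insert, Set.union_comm]
          calc ∑ m ∈ Finset.range (M+1), tau0 μ φ (C m)
              = (∑ m ∈ Finset.range M, tau0 μ φ (C m)) + tau0 μ φ (C M) :=
                Finset.sum_range_succ _ M
          _ ≤ tau0 μ φ (⋃ m ∈ Finset.range M, C m) + tau0 μ φ (C M) := by
                exact add_le_add_left ih _
          _ ≤ tau0 μ φ ((⋃ m ∈ Finset.range M, C m) ∪ C M) := tau0_add_le hμ φ hdisj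
          _ = _ := by rw [hset]
    rw [ENNReal.tsum_eq_iSup_sum]
    apply iSup_le
    intro s
    obtain ⟨M, hM⟩ := s.exists_nat_subset_range
    calc ∑ m ∈ s, tau0 μ φ (C m) ≤ ∑ m ∈ Finset.range M, tau0 μ φ (C m) :=
          Finset.sum_le_sum_of_subset hM
    _ ≤ tau0 μ φ (⋃ m ∈ Finset.range M, C m) := claim M
    _ ≤ tau0 μ φ (⋃ m, C m) := tau0_mono φ (by
          apply Set.iUnion₂_subset; intro m _; exact Set.subset_iUnion C m)

/-- the semivariation control measure -/
noncomputable def tauM (hμ : IsIMeasure μ) (φ : StrongDual ℝ F) : Measure Z :=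
  Measure.ofMeasurable (fun A _ => tau0 μ φ A) (tau0_empty hμ φ)
    (fun C hCm hCd => tau0_iUnion hμ φ C hCm hCd)

lemma tauM_apply {A : Set Z} (hA : MeasurableSet A) : tauM hμ φ A = tau0 μ φ A :=
  Measure.ofMeasurable_apply A hA

lemma tauM_univ_lt_top : tauM hμ φ Set.univ < ⊤ := by
  obtain ⟨R, hR⟩ := smallOn_univ hμ φ
  rw [tauM_apply hμ φ MeasurableSet.univ]
  apply lt_of_le_of_lt (b := ENNReal.ofReal R) _ ENNReal.ofReal_lt_top
  apply iSup_le
  intro p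
  apply ENNReal.ofReal_le_ofReal
  exact hR p.1.1 p.1.2 p.2.1 p.2.2.1 p.2.2.2

instance : IsFiniteMeasure (tauM hμ φ) := ⟨tauM_univ_lt_top hμ φ⟩

lemma tauM_lt_top {A : Set Z} : tauM hμ φ A < ⊤ :=
  lt_of_le_of_lt (MeasureTheory.measure_mono (Set.subset_univ A)) (tauM_univ_lt_top hμ φ)

lemma sig_le_tauM {A : Set Z} (hA : MeasurableSet A) :
    sig μ φ A ≤ (tauM hμ φ A).toReal := by
  have h1 : ENNReal.ofReal (sig μ φ A) ≤ tauM hμ φ A := by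
    rw [tauM_apply hμ φ hA]; exact le_tau0 hμ φ hA
  have h2 := ENNReal.toReal_mono (tauM_lt_top hμ φ).ne h1
  rwa [ENNReal.toReal_ofReal (sig_nonneg μ φ A)] at h2

lemma abs_nu_le_tauM {A : Set Z} (hA : MeasurableSet A) (x : E) :
    |φ (μ A x)| ≤ ‖x‖ * (tauM hμ φ A).toReal := by
  calc |φ (μ A x)| ≤ sig μ φ A * ‖x‖ := abs_nu_le μ φ A x
  _ ≤ (tauM hμ φ A).toReal * ‖x‖ :=
      mul_le_mul_of_nonneg_right (sig_le_tauM hμ φ hA) (norm_nonneg x)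
  _ = ‖x‖ * (tauM hμ φ A).toReal := mul_comm _ _

end BWCaux

namespace BWCaux

open scoped Classical

variable {Z E F : Type*} [MeasurableSpace Z]
    [NormedAddCommGroup E] [NormedSpace ℝ E]
    [NormedAddCommGroup F] [NormedSpace ℝ F]
    {μ : Set Z → E →L[ℝ] F} (hμ : IsIMeasure μ) (φ : StrongDual ℝ F)

/-- the scalar signed measure `A ↦ φ(μ(A)x)` -/
noncomputable def snu (hμ : IsIMeasure μ) (φ : StrongDual ℝ F) (x : E) :
    SignedMeasure Z where
  measureOf' := fun A => if MeasurableSet A then φ (μ A x) else 0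
  empty' := by simp [mu_empty hμ x]
  not_measurable' := fun A hA => if_neg hA
  m_iUnion' := by
    intro f hf hd
    have h1 : (fun i => if MeasurableSet (f i) then φ (μ (f i) x) else 0) =
        fun i => φ (μ (f i) x) := by
      funext i; rw [if_pos (hf i)]
    rw [h1]
    have hU : MeasurableSet (⋃ i, f i) := MeasurableSet.iUnion hf
    have h2 : (fun A => if MeasurableSet A then φ (μ A x) else 0) (⋃ i, f i) =
        φ (μ (⋃ i, f i) x) := if_pos hU
    rw [if_pos hU]
    exact nu_hasSum hμ φ hf hd x

lemma snu_apply {A : Set Z} (hA : MeasurableSet A) (x : E) :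
    snu hμ φ x A = φ (μ A x) := if_pos hA

lemma snu_absCont (x : E) :
    snu hμ φ x ≪ᵥ (tauM hμ φ).toENNRealVectorMeasure := by
  apply MeasureTheory.VectorMeasure.AbsolutelyContinuous.mk
  intro s hs h0
  rw [Measure.toENNRealVectorMeasure_apply_measurable hs] at h0
  rw [snu_apply hμ φ hs x]
  have hb := abs_nu_le_tauM hμ φ hs x
  rw [h0] at hb
  simp only [ENNReal.toReal_zero, mul_zero] at hb
  exact abs_eq_zero.1 (le_antisymm hb (abs_nonneg _))

/-- weak density of the scalarized measure in direction `x` -/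
noncomputable def DD (hμ : IsIMeasure μ) (φ : StrongDual ℝ F) (x : E) : Z → ℝ :=
  (snu hμ φ x).rnDeriv (tauM hμ φ)

lemma DD_meas (x : E) : Measurable (DD hμ φ x) :=
  SignedMeasure.measurable_rnDeriv _ _

lemma DD_int (x : E) : Integrable (DD hμ φ x) (tauM hμ φ) :=
  SignedMeasure.integrable_rnDeriv _ _

lemma setIntegral_DD {A : Set Z} (hA : MeasurableSet A) (x : E) :
    ∫ z in A, DD hμ φ x z ∂(tauM hμ φ) = φ (μ A x) := by
  have h1 := SignedMeasure.withDensityᵥ_rnDeriv_eq (snu hμ φ x) (tauM hμ φ)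
    (snu_absCont hμ φ x)
  have h3 : ∫ z in A, DD hμ φ x z ∂(tauM hμ φ) = snu hμ φ x A := by
    have h2 := withDensityᵥ_apply (SignedMeasure.integrable_rnDeriv (snu hμ φ x) (tauM hμ φ)) hA
    rw [h1] at h2
    exact h2.symm
  rw [h3, snu_apply hμ φ hA x]

lemma DD_add (x y : E) : DD hμ φ (x + y) =ᵐ[tauM hμ φ] DD hμ φ x + DD hμ φ y := by
  apply Integrable.ae_eq_of_forall_setIntegral_eq _ _ (DD_int hμ φ (x+y))
    ((DD_int hμ φ x).add (DD_int hμ φ y))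
  intro s hs _
  rw [setIntegral_DD hμ φ hs (x+y)]
  simp only [Pi.add_apply]
  rw [integral_add ((DD_int hμ φ x).integrableOn) ((DD_int hμ φ y).integrableOn)]
  rw [setIntegral_DD hμ φ hs x, setIntegral_DD hμ φ hs y]
  simp [map_add]

lemma DD_smul (c : ℝ) (x : E) : DD hμ φ (c • x) =ᵐ[tauM hμ φ] c • DD hμ φ x := by
  apply Integrable.ae_eq_of_forall_setIntegral_eq _ _ (DD_int hμ φ (c • x))
    ((DD_int hμ φ x).smul c)
  intro s hs _
  rw [setIntegral_DD hμ φ hs (c • x)]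
  have : ∫ z in s, (c • DD hμ φ x) z ∂(tauM hμ φ) = c * ∫ z in s, DD hμ φ x z ∂(tauM hμ φ) := by
    simp only [Pi.smul_apply, smul_eq_mul]
    exact integral_const_mul c _
  rw [this, setIntegral_DD hμ φ hs x]
  simp [_root_.map_smul]

lemma DD_bound (x : E) : ∀ᵐ z ∂(tauM hμ φ), |DD hμ φ x z| ≤ ‖x‖ := by
  have hup : ∀ q : ℚ, ‖x‖ < q → (tauM hμ φ) {z | (q:ℝ) ≤ DD hμ φ x z} = 0 := by
    intro q hq
    set A := {z | (q:ℝ) ≤ DD hμ φ x z} with hA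
    have hAm : MeasurableSet A := measurableSet_le measurable_const (DD_meas hμ φ x)
    set t := ((tauM hμ φ) A).toReal with ht
    have htnn : 0 ≤ t := ENNReal.toReal_nonneg
    have h1 : (q:ℝ) * t ≤ ∫ z in A, DD hμ φ x z ∂(tauM hμ φ) := by
      have := setIntegral_mono_on (integrableOn_const (tauM_lt_top hμ φ).ne)
        ((DD_int hμ φ x).integrableOn) hAm (fun z hz => hz)
      calc (q:ℝ) * t = ∫ _ in A, (q:ℝ) ∂(tauM hμ φ) := by
            rw [setIntegral_const]; rw [smul_eq_mul]; rw [measureReal_def, ht]; ring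
      _ ≤ _ := this
    have h2 : ∫ z in A, DD hμ φ x z ∂(tauM hμ φ) ≤ ‖x‖ * t := by
      rw [setIntegral_DD hμ φ hAm x]
      calc φ (μ A x) ≤ |φ (μ A x)| := le_abs_self _
      _ ≤ ‖x‖ * t := abs_nu_le_tauM hμ φ hAm x
    have h3 : (q:ℝ) * t ≤ ‖x‖ * t := le_trans h1 h2
    have ht0 : t = 0 := by
      by_contra hc
      have : 0 < t := lt_of_le_of_ne htnn (Ne.symm hc)
      nlinarith
    rw [ht] at ht0
    exact (ENNReal.toReal_eq_zero_iff _).1 ht0 |>.resolve_right (tauM_lt_top hμ φ).ne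
  have hdn : ∀ q : ℚ, ‖x‖ < q → (tauM hμ φ) {z | DD hμ φ x z ≤ -(q:ℝ)} = 0 := by
    intro q hq
    set A := {z | DD hμ φ x z ≤ -(q:ℝ)} with hA
    have hAm : MeasurableSet A := measurableSet_le (DD_meas hμ φ x) measurable_const
    set t := ((tauM hμ φ) A).toReal with ht
    have htnn : 0 ≤ t := ENNReal.toReal_nonneg
    have h1 : ∫ z in A, DD hμ φ x z ∂(tauM hμ φ) ≤ -(q:ℝ) * t := by
      have := setIntegral_mono_on ((DD_int hμ φ x).integrableOn)
        (integrableOn_const (tauM_lt_top hμ φ).ne) hAm (fun z hz => hz)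
      calc ∫ z in A, DD hμ φ x z ∂(tauM hμ φ) ≤ ∫ _ in A, (-(q:ℝ)) ∂(tauM hμ φ) := this
      _ = -(q:ℝ) * t := by rw [setIntegral_const]; rw [smul_eq_mul]; rw [measureReal_def, ht]; ring
    have h2 : -(‖x‖ * t) ≤ ∫ z in A, DD hμ φ x z ∂(tauM hμ φ) := by
      rw [setIntegral_DD hμ φ hAm x]
      have := abs_nu_le_tauM hμ φ hAm x
      have := neg_abs_le (φ (μ A x))
      linarith [abs_nu_le_tauM hμ φ hAm x, neg_abs_le (φ (μ A x))]
    have h3 : -(‖x‖ * t) ≤ -(q:ℝ) * t := le_trans h2 h1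
    have ht0 : t = 0 := by
      by_contra hc
      have : 0 < t := lt_of_le_of_ne htnn (Ne.symm hc)
      nlinarith
    rw [ht] at ht0
    exact (ENNReal.toReal_eq_zero_iff _).1 ht0 |>.resolve_right (tauM_lt_top hμ φ).ne
  have h1 : ∀ᵐ z ∂(tauM hμ φ), ∀ q : ℚ, ‖x‖ < q → DD hμ φ x z < q := by
    rw [MeasureTheory.ae_all_iff]
    intro q
    by_cases hq : ‖x‖ < q
    · have := hup q hq
      have h2 : ∀ᵐ z ∂(tauM hμ φ), z ∉ {z | (q:ℝ) ≤ DD hμ φ x z} :=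
        (MeasureTheory.measure_eq_zero_iff_ae_notMem).1 this
      filter_upwards [h2] with z hz _
      exact lt_of_not_ge (fun hc => hz hc)
    · filter_upwards with z hz
      exact absurd hz hq
  have h2 : ∀ᵐ z ∂(tauM hμ φ), ∀ q : ℚ, ‖x‖ < q → -(q:ℝ) < DD hμ φ x z := by
    rw [MeasureTheory.ae_all_iff]
    intro q
    by_cases hq : ‖x‖ < q
    · have := hdn q hq
      have h2 : ∀ᵐ z ∂(tauM hμ φ), z ∉ {z | DD hμ φ x z ≤ -(q:ℝ)} :=
        (MeasureTheory.measure_eq_zero_iff_ae_notMem).1 this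
      filter_upwards [h2] with z hz _
      exact lt_of_not_ge (fun hc => hz hc)
    · filter_upwards with z hz
      exact absurd hz hq
  filter_upwards [h1, h2] with z hz1 hz2
  rw [abs_le]
  constructor
  · by_contra hc
    push_neg at hc
    obtain ⟨q, hq1, hq2⟩ := exists_rat_btwn (show ‖x‖ < -(DD hμ φ x z) by linarith)
    have := hz2 q hq1
    linarith
  · by_contra hc
    push_neg at hc
    obtain ⟨q, hq1, hq2⟩ := exists_rat_btwn hc
    exact absurd (hz1 q hq1) (not_lt.2 hq2.le)

end BWCaux

namespace BWCaux

variable {E : Type*} [NormedAddCommGroup E] [NormedSpace ℝ E]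

lemma extension_lemma (W : Set E) (hW0 : (0:E) ∈ W)
    (hWadd : ∀ a ∈ W, ∀ b ∈ W, a + b ∈ W)
    (hWsmul : ∀ (q : ℚ), ∀ a ∈ W, (q:ℝ) • a ∈ W)
    (FF : E → ℝ) (hadd : ∀ a ∈ W, ∀ b ∈ W, FF (a + b) = FF a + FF b)
    (hsmul : ∀ (q : ℚ), ∀ a ∈ W, FF ((q:ℝ) • a) = q * FF a)
    (hbd : ∀ a ∈ W, |FF a| ≤ ‖a‖) :
    ∃ ψ : E →L[ℝ] ℝ, ‖ψ‖ ≤ 1 ∧ ∀ a ∈ W, ψ a = FF a := by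
  classical
  have hWneg : ∀ a ∈ W, -a ∈ W := by
    intro a ha
    have := hWsmul (-1) a ha
    simpa using this
  have hWsub : ∀ a ∈ W, ∀ b ∈ W, a - b ∈ W := by
    intro a ha b hb
    have := hWadd a ha (-b) (hWneg b hb)
    simpa [sub_eq_add_neg] using this
  have hlip : ∀ a ∈ W, ∀ b ∈ W, |FF a - FF b| ≤ ‖a - b‖ := by
    intro a ha b hb
    have h1 : FF ((a - b) + b) = FF (a - b) + FF b := hadd _ (hWsub a ha b hb) _ hb
    rw [sub_add_cancel] at h1
    rw [h1]
    simpa using hbd _ (hWsub a ha b hb)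
  -- the closure of W is an ℝ-subspace
  have hcadd : ∀ a ∈ closure W, ∀ b ∈ closure W, a + b ∈ closure W := by
    intro a ha b hb
    exact map_mem_closure₂ continuous_add ha hb (fun x hx y hy => hWadd x hx y hy)
  have hcsmulq : ∀ (q : ℚ), ∀ a ∈ closure W, (q:ℝ) • a ∈ closure W := by
    intro q a ha
    exact map_mem_closure (continuous_const_smul _) ha (fun x hx => hWsmul q x hx)
  have hcsmul : ∀ (c : ℝ), ∀ a ∈ closure W, c • a ∈ closure W := by
    intro c a ha
    have hdense : c ∈ closure (Set.range ((↑) : ℚ → ℝ)) := by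
      rw [Rat.denseRange_cast.closure_eq]; trivial
    have hcont : Continuous (fun r : ℝ => r • a) := continuous_id.smul continuous_const
    have : (fun r : ℝ => r • a) c ∈ closure ((fun r : ℝ => r • a) '' (Set.range ((↑) : ℚ → ℝ))) :=
      map_mem_closure (f := fun r : ℝ => r • a) hcont hdense (Set.mapsTo_image _ _)
    apply closure_minimal _ isClosed_closure this
    rintro _ ⟨r, ⟨q, rfl⟩, rfl⟩
    exact hcsmulq q a ha
  set Ysub : Subspace ℝ E :=
    { carrier := closure W
      add_mem' := fun {a b} ha hb => hcadd a ha b hb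
      zero_mem' := subset_closure hW0
      smul_mem' := fun c a ha => hcsmul c a ha } with hYsub
  -- approximating sequences
  have husel : ∀ y : E, ∃ u : ℕ → E, y ∈ closure W → (∀ j, u j ∈ W) ∧ Tendsto u atTop (𝓝 y) := by
    intro y
    by_cases hy : y ∈ closure W
    · obtain ⟨u, hu1, hu2⟩ := mem_closure_iff_seq_limit.1 hy
      exact ⟨u, fun _ => ⟨hu1, hu2⟩⟩
    · exact ⟨fun _ => 0, fun h => absurd h hy⟩
  choose u hu using husel
  have hlim : ∀ y : E, ∃ L : ℝ, y ∈ closure W →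
      Tendsto (fun j => FF (u y j)) atTop (𝓝 L) := by
    intro y
    by_cases hy : y ∈ closure W
    · obtain ⟨huW, huT⟩ := hu y hy
      have hcau : CauchySeq (fun j => FF (u y j)) := by
        rw [Metric.cauchySeq_iff]
        intro ε hε
        have := (Metric.cauchySeq_iff.1 huT.cauchySeq) ε hε
        obtain ⟨N, hN⟩ := this
        refine ⟨N, fun m hm n hn => ?_⟩
        have h1 := hlip _ (huW m) _ (huW n)
        have h2 := hN m hm n hn
        rw [Real.dist_eq]
        rw [dist_eq_norm] at h2
        exact lt_of_le_of_lt h1 h2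
      obtain ⟨L, hL⟩ := cauchySeq_tendsto_of_complete hcau
      exact ⟨L, fun _ => hL⟩
    · exact ⟨0, fun h => absurd h hy⟩
  choose val hval using hlim
  have key : ∀ y ∈ closure W, ∀ (v : ℕ → E), (∀ j, v j ∈ W) → Tendsto v atTop (𝓝 y) →
      Tendsto (fun j => FF (v j)) atTop (𝓝 (val y)) := by
    intro y hy v hvW hvT
    obtain ⟨huW, huT⟩ := hu y hy
    have hdiff : Tendsto (fun j => FF (v j) - FF (u y j)) atTop (𝓝 0) := by
      apply squeeze_zero_norm (fun j => hlip _ (hvW j) _ (huW j))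
      have : Tendsto (fun j => v j - u y j) atTop (𝓝 (y - y)) := hvT.sub huT
      rw [sub_self] at this
      exact this.norm.congr' (by filter_upwards with j; rfl) |>.congr'
        (by filter_upwards with j; rfl) |>.mono_right (by rw [norm_zero])
    have h2 := hval y hy
    have := hdiff.add h2
    rw [zero_add] at this
    apply this.congr
    intro j; ring
  have valW : ∀ a ∈ W, val a = FF a := by
    intro a ha
    have h1 := key a (subset_closure ha) (fun _ => a) (fun _ => ha) tendsto_const_nhds
    exact (tendsto_nhds_unique h1 tendsto_const_nhds).symm ▸ rfl
  have valW' : ∀ a ∈ W, val a = FF a := valW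
  have valadd : ∀ a ∈ closure W, ∀ b ∈ closure W, val (a + b) = val a + val b := by
    intro a ha b hb
    obtain ⟨haW, haT⟩ := hu a ha
    obtain ⟨hbW, hbT⟩ := hu b hb
    have h1 := key (a+b) (hcadd a ha b hb) (fun j => u a j + u b j)
      (fun j => hWadd _ (haW j) _ (hbW j)) (haT.add hbT)
    have h2 : Tendsto (fun j => FF (u a j + u b j)) atTop (𝓝 (val a + val b)) := by
      have e : (fun j => FF (u a j + u b j)) = fun j => FF (u a j) + FF (u b j) := by
        funext j; exact hadd _ (haW j) _ (hbW j)
      rw [e]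
      exact (hval a ha).add (hval b hb)
    exact tendsto_nhds_unique h1 h2
  have vallip : ∀ a ∈ closure W, ∀ b ∈ closure W, |val a - val b| ≤ ‖a - b‖ := by
    intro a ha b hb
    obtain ⟨haW, haT⟩ := hu a ha
    obtain ⟨hbW, hbT⟩ := hu b hb
    have h1 : Tendsto (fun j => FF (u a j) - FF (u b j)) atTop (𝓝 (val a - val b)) :=
      (hval a ha).sub (hval b hb)
    have h2 : Tendsto (fun j => ‖u a j - u b j‖) atTop (𝓝 ‖a - b‖) := (haT.sub hbT).norm
    have h3 : Tendsto (fun j => |FF (u a j) - FF (u b j)|) atTop (𝓝 |val a - val b|) := h1.abs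
    exact le_of_tendsto_of_tendsto h3 h2
      (by filter_upwards with j; exact hlip _ (haW j) _ (hbW j))
  have valbd : ∀ a ∈ closure W, |val a| ≤ ‖a‖ := by
    intro a ha
    have := vallip a ha 0 (subset_closure hW0)
    have h0 : val 0 = FF 0 := valW 0 hW0
    have hF0 : FF 0 = 0 := by
      have := hsmul 0 0 hW0
      simpa using this
    rw [h0, hF0, sub_zero, sub_zero] at this
    exact this
  have valsmulq : ∀ (q : ℚ), ∀ a ∈ closure W, val ((q:ℝ) • a) = q * val a := by
    intro q a ha
    obtain ⟨haW, haT⟩ := hu a ha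
    have h1 := key ((q:ℝ) • a) (hcsmulq q a ha) (fun j => (q:ℝ) • u a j)
      (fun j => hWsmul q _ (haW j)) (haT.const_smul _)
    have h2 : Tendsto (fun j => FF ((q:ℝ) • u a j)) atTop (𝓝 ((q:ℝ) * val a)) := by
      have e : (fun j => FF ((q:ℝ) • u a j)) = fun j => (q:ℝ) * FF (u a j) := by
        funext j; exact hsmul q _ (haW j)
      rw [e]
      exact (hval a ha).const_mul _
    exact tendsto_nhds_unique h1 h2
  have valsmul : ∀ (c : ℝ), ∀ a ∈ closure W, val (c • a) = c * val a := by
    intro c a ha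
    have hq : ∀ n : ℕ, ∃ q : ℚ, |c - (q:ℝ)| < 1/(n+1) := by
      intro n
      exact exists_rat_near c (by positivity)
    choose qs hqs using hq
    have hqT : Tendsto (fun n => ((qs n : ℝ))) atTop (𝓝 c) := by
      rw [tendsto_iff_dist_tendsto_zero]
      apply squeeze_zero (fun n => dist_nonneg) (fun n => ?_) tendsto_one_div_add_atTop_nhds_zero_nat
      rw [Real.dist_eq, abs_sub_comm]
      exact (hqs n).le
    have h1 : Tendsto (fun n => val ((qs n : ℝ) • a)) atTop (𝓝 (val (c • a))) := by
      have hT : Tendsto (fun n => (qs n : ℝ) • a) atTop (𝓝 (c • a)) :=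
        hqT.smul tendsto_const_nhds
      rw [tendsto_iff_dist_tendsto_zero]
      apply squeeze_zero (fun n => dist_nonneg) (fun n => ?_)
        (by simpa using (hT.sub (tendsto_const_nhds (x := c • a))).norm)
      rw [Real.dist_eq]
      exact vallip _ (hcsmulq _ a ha) _ (hcsmul c a ha)
    have h2 : Tendsto (fun n => val ((qs n : ℝ) • a)) atTop (𝓝 (c * val a)) := by
      have e : (fun n => val ((qs n : ℝ) • a)) = fun n => (qs n : ℝ) * val a := by
        funext n; exact valsmulq (qs n) a ha
      rw [e]
      exact hqT.mul_const _
    exact tendsto_nhds_unique h1 h2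
  -- bundle as continuous linear map on the subspace and extend
  set lin : Ysub →ₗ[ℝ] ℝ :=
    { toFun := fun y => val y.1
      map_add' := fun y z => valadd y.1 y.2 z.1 z.2
      map_smul' := fun c y => valsmul c y.1 y.2 } with hlin
  have hbound : ∀ y : Ysub, ‖lin y‖ ≤ 1 * ‖y‖ := by
    intro y
    rw [one_mul]
    exact (valbd y.1 y.2).trans_eq rfl
  set cont := lin.mkContinuous 1 hbound with hcont
  obtain ⟨g, hg1, hg2⟩ := exists_extension_norm_eq Ysub cont
  refine ⟨g, ?_, ?_⟩
  · rw [hg2]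
    exact lin.mkContinuous_norm_le zero_le_one hbound
  · intro a ha
    have := hg1 ⟨a, subset_closure ha⟩
    rw [this]
    exact valW a ha

end BWCaux

namespace BWCaux

variable {Z E F : Type*} [MeasurableSpace Z]
    [NormedAddCommGroup E] [NormedSpace ℝ E] [MeasurableSpace E] [BorelSpace E]
    [NormedAddCommGroup F] [NormedSpace ℝ F]
    {μ : Set Z → E →L[ℝ] F} (hμ : IsIMeasure μ) (φ : StrongDual ℝ F)

lemma psi_lip (ψ : E →L[ℝ] ℝ) (hψ : ‖ψ‖ ≤ 1) (a b : E) : |ψ a - ψ b| ≤ ‖a - b‖ := by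
  have h1 : ψ a - ψ b = ψ (a - b) := by rw [map_sub]
  rw [h1]
  calc |ψ (a - b)| ≤ ‖ψ‖ * ‖a - b‖ := ψ.le_opNorm (a-b)
  _ ≤ 1 * ‖a - b‖ := mul_le_mul_of_nonneg_right hψ (norm_nonneg _)
  _ = ‖a - b‖ := one_mul _

lemma psi_bound (ψ : E →L[ℝ] ℝ) (hψ : ‖ψ‖ ≤ 1) (a : E) : |ψ a| ≤ ‖a‖ := by
  have := psi_lip ψ hψ a 0
  simpa using this

lemma psi_meas_closure (W : Set E) (ψ : Z → (E →L[ℝ] ℝ)) (hψnorm : ∀ z, ‖ψ z‖ ≤ 1)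
    (hψmeas : ∀ a ∈ W, Measurable (fun z => ψ z a)) :
    ∀ x ∈ closure W, Measurable (fun z => ψ z x) := by
  intro x hx
  obtain ⟨v, hvW, hvT⟩ := mem_closure_iff_seq_limit.1 hx
  apply measurable_of_tendsto_metrizable (f := fun j => fun z => ψ z (v j))
    (fun j => hψmeas _ (hvW j))
  rw [tendsto_pi_nhds]
  intro z
  rw [tendsto_iff_dist_tendsto_zero]
  apply squeeze_zero (fun n => dist_nonneg) (fun n => ?_)
    (by simpa using (hvT.sub (tendsto_const_nhds (x := x))).norm)
  rw [Real.dist_eq]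
  exact psi_lip _ (hψnorm z) _ _

lemma psi_comp_meas (W : Set E) (ψ : Z → (E →L[ℝ] ℝ)) (hψnorm : ∀ z, ‖ψ z‖ ≤ 1)
    (hψmeas : ∀ a ∈ W, Measurable (fun z => ψ z a)) (hW0 : (0:E) ∈ W)
    (hfun : Z → E) (hfm : Measurable hfun)
    (hsep : TopologicalSpace.IsSeparable (Set.range hfun))
    (hrange : Set.range hfun ⊆ closure W) :
    Measurable (fun z => ψ z (hfun z)) := by
  classical
  have hCmeas := psi_meas_closure W ψ hψnorm hψmeas
  set s : Set E := Set.range hfun ∪ {0} with hs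
  have hsep' : TopologicalSpace.IsSeparable s :=
    hsep.union ((Set.finite_singleton 0).isSeparable)
  haveI : TopologicalSpace.SeparableSpace s := hsep'.separableSpace
  have h0s : (0:E) ∈ s := Or.inr rfl
  have hscl : s ⊆ closure W := by
    intro v hv
    rcases hv with hv | hv
    · exact hrange hv
    · rw [hv]; exact subset_closure hW0
  set sj : ℕ → SimpleFunc Z E := fun j => SimpleFunc.approxOn hfun hfm s 0 h0s j with hsj
  have hsmeas : ∀ j, Measurable (fun z => ψ z (sj j z)) := by
    intro j
    have hrepr : (fun z => ψ z (sj j z)) =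
        fun z => ∑ v ∈ (sj j).range, if (sj j) z = v then ψ z v else 0 := by
      funext z
      rw [Finset.sum_ite_eq (sj j).range ((sj j) z) (fun v => ψ z v)]
      rw [if_pos ((sj j).mem_range_self z)]
    rw [hrepr]
    apply Finset.measurable_sum
    intro v hv
    obtain ⟨z0, hz0⟩ := SimpleFunc.mem_range.1 hv
    have hvs : v ∈ s := by rw [← hz0]; exact SimpleFunc.approxOn_mem hfm h0s j z0
    apply Measurable.ite _ (hCmeas v (hscl hvs)) measurable_const
    exact (sj j).measurableSet_fiber v
  apply measurable_of_tendsto_metrizable hsmeas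
  rw [tendsto_pi_nhds]
  intro z
  have hT : Tendsto (fun j => (sj j) z) atTop (𝓝 (hfun z)) :=
    SimpleFunc.tendsto_approxOn hfm h0s (subset_closure (Or.inl (Set.mem_range_self z)))
  rw [tendsto_iff_dist_tendsto_zero]
  apply squeeze_zero (fun n => dist_nonneg) (fun n => ?_)
    (by simpa using (hT.sub (tendsto_const_nhds (x := hfun z))).norm)
  rw [Real.dist_eq]
  exact psi_lip _ (hψnorm z) _ _

include hμ

/-- Representation of the integral through the pointwise weak-* density. -/
lemma rep_lemma (W : Set E) (hW0 : (0:E) ∈ W)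
    (ψ : Z → (E →L[ℝ] ℝ)) (hψnorm : ∀ z, ‖ψ z‖ ≤ 1)
    (hψmeas : ∀ a ∈ W, Measurable (fun z => ψ z a))
    (hψint : ∀ a ∈ W, ∀ A : Set Z, MeasurableSet A →
      ∫ z in A, ψ z a ∂(tauM hμ φ) = φ (μ A a))
    (hfun : Z → E) (hfm : Measurable hfun)
    (hsep : TopologicalSpace.IsSeparable (Set.range hfun))
    (hrange : Set.range hfun ⊆ closure W) {C : ℝ} (hbdf : ∀ z, ‖hfun z‖ ≤ C)
    (yy : F) (gk : ℕ → Z → E) (wk : ℕ → F)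
    (hclose : ∀ k z, ‖gk k z - hfun z‖ ≤ 1/((k:ℝ)+1))
    (hconv : Tendsto wk atTop (𝓝 yy))
    (ee : ℕ → ℕ → E) (AA : ℕ → ℕ → Set Z)
    (hAm : ∀ k m, MeasurableSet (AA k m))
    (hAd : ∀ k, Pairwise (Function.onFun Disjoint (AA k)))
    (hAU : ∀ k, (⋃ m, AA k m) = Set.univ)
    (hAe : ∀ k m, ∀ z ∈ AA k m, gk k z = ee k m)
    (hAt : ∀ k, Tendsto (fun M => ∑ m ∈ Finset.range M, μ (AA k m) (ee k m)) atTop (𝓝 (wk k)))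
    (heW : ∀ k m, ee k m ∈ W) :
    φ yy = ∫ z, ψ z (hfun z) ∂(tauM hμ φ) := by
  classical
  set τ := tauM hμ φ with hτ
  have hone : ∀ k : ℕ, 1/((k:ℝ)+1) ≤ 1 := by
    intro k
    rw [div_le_one (by positivity)]
    linarith [Nat.cast_nonneg (α := ℝ) k]
  have hgkbd : ∀ k z, ‖gk k z‖ ≤ C + 1 := by
    intro k z
    calc ‖gk k z‖ = ‖hfun z + (gk k z - hfun z)‖ := by congr 1; abel
    _ ≤ ‖hfun z‖ + ‖gk k z - hfun z‖ := norm_add_le _ _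
    _ ≤ C + 1 := add_le_add (hbdf z) ((hclose k z).trans (hone k))
  -- the composite with hfun
  set v : Z → ℝ := fun z => ψ z (hfun z) with hv
  have hvmeas : Measurable v :=
    psi_comp_meas W ψ hψnorm hψmeas hW0 hfun hfm hsep hrange
  have hvbd : ∀ z, |v z| ≤ C := fun z => (psi_bound _ (hψnorm z) _).trans (hbdf z)
  have hvint : Integrable v τ := by
    apply Integrable.mono' (integrable_const C) hvmeas.aestronglyMeasurable
    filter_upwards with z
    simpa [Real.norm_eq_abs] using hvbd z
  -- step A : φ (wk k) is the integral of the k-th countably valued approximation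
  have stepA : ∀ k, φ (wk k) = ∫ z, ψ z (gk k z) ∂τ ∧
      Integrable (fun z => ψ z (gk k z)) τ := by
    intro k
    set u : Z → ℝ := fun z => ψ z (gk k z) with hu
    have humeas : Measurable u := by
      set SN : ℕ → Z → ℝ := fun M z =>
        ∑ m ∈ Finset.range M, (AA k m).indicator (fun z' => ψ z' (ee k m)) z with hSN
      have hSNmeas : ∀ M, Measurable (SN M) := by
        intro M
        apply Finset.measurable_sum
        intro m _
        exact (hψmeas _ (heW k m)).indicator (hAm k m)
      apply measurable_of_tendsto_metrizable hSNmeas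
      rw [tendsto_pi_nhds]
      intro z
      obtain ⟨m0, hm0⟩ : ∃ m, z ∈ AA k m := by
        have hz : z ∈ ⋃ m, AA k m := by rw [hAU k]; trivial
        exact Set.mem_iUnion.1 hz
      apply tendsto_atTop_of_eventually_const (i₀ := m0 + 1)
      intro M hM
      have h1 : SN M z = ψ z (ee k m0) := by
        simp only [hSN]
        rw [Finset.sum_eq_single m0]
        · rw [Set.indicator_of_mem hm0]
        · intro m hm hne
          apply Set.indicator_of_notMem
          intro hzm
          exact Set.disjoint_left.1 ((hAd k) hne) hzm hm0
        · intro hm0M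
          exact absurd (Finset.mem_range.2 (by omega)) hm0M
      rw [h1]
      simp only [hu]
      rw [hAe k m0 z hm0]
    have hubd : ∀ z, |u z| ≤ C + 1 := fun z => (psi_bound _ (hψnorm z) _).trans (hgkbd k z)
    have huint : Integrable u τ := by
      apply Integrable.mono' (integrable_const (C+1)) humeas.aestronglyMeasurable
      filter_upwards with z
      simpa [Real.norm_eq_abs] using hubd z
    refine ⟨?_, huint⟩
    have hterm : ∀ m, ∫ z in AA k m, u z ∂τ = φ (μ (AA k m) (ee k m)) := by
      intro m
      have h1 : ∫ z in AA k m, u z ∂τ = ∫ z in AA k m, ψ z (ee k m) ∂τ := by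
        apply setIntegral_congr_fun (hAm k m)
        intro z hz
        simp only [hu]; rw [hAe k m z hz]
      rw [h1, hψint _ (heW k m) _ (hAm k m)]
    have hHasSum : HasSum (fun m => ∫ z in AA k m, u z ∂τ) (∫ z, u z ∂τ) := by
      have hio : IntegrableOn u (⋃ m, AA k m) τ := by
        rw [hAU k]
        rw [IntegrableOn, Measure.restrict_univ]
        exact huint
      have h2 := hasSum_integral_iUnion (hAm k) (hAd k) hio
      rwa [hAU k, Measure.restrict_univ] at h2
    have hpart : Tendsto (fun M => ∑ m ∈ Finset.range M, φ (μ (AA k m) (ee k m))) atTop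
        (𝓝 (∫ z, u z ∂τ)) := by
      have := hHasSum.tendsto_sum_nat
      apply this.congr
      intro M
      exact Finset.sum_congr rfl (fun m _ => hterm m)
    have hpart2 : Tendsto (fun M => ∑ m ∈ Finset.range M, φ (μ (AA k m) (ee k m))) atTop
        (𝓝 (φ (wk k))) := by
      have h2 := (φ.continuous.tendsto _).comp (hAt k)
      have e : (⇑φ ∘ fun M => ∑ m ∈ Finset.range M, (μ (AA k m)) (ee k m)) =
          fun M => ∑ m ∈ Finset.range M, φ ((μ (AA k m)) (ee k m)) := by
        funext M; simp [map_sum]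
      rwa [e] at h2
    exact tendsto_nhds_unique hpart2 hpart
  -- step B : uniform comparison
  have stepB : ∀ k, |φ (wk k) - ∫ z, v z ∂τ| ≤ (1/((k:ℝ)+1)) * (τ Set.univ).toReal := by
    intro k
    obtain ⟨hA1, hA2⟩ := stepA k
    rw [hA1]
    rw [← integral_sub hA2 hvint]
    calc |∫ z, (ψ z (gk k z) - v z) ∂τ| ≤ ∫ z, |ψ z (gk k z) - v z| ∂τ := by
          simpa [Real.norm_eq_abs] using
            norm_integral_le_integral_norm (fun z => ψ z (gk k z) - v z) (μ := τ)
    _ ≤ ∫ _, (1/((k:ℝ)+1)) ∂τ := by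
        apply integral_mono ((hA2.sub hvint).abs) (integrable_const _)
        intro z
        have := psi_lip (ψ z) (hψnorm z) (gk k z) (hfun z)
        exact this.trans (hclose k z)
    _ = (τ Set.univ).toReal * (1/((k:ℝ)+1)) := by rw [integral_const]; simp [Measure.real]
    _ = (1/((k:ℝ)+1)) * (τ Set.univ).toReal := mul_comm _ _
  -- conclude
  have hlim1 : Tendsto (fun k => φ (wk k)) atTop (𝓝 (φ yy)) :=
    (φ.continuous.tendsto _).comp hconv
  have hlim2 : Tendsto (fun k => φ (wk k)) atTop (𝓝 (∫ z, v z ∂τ)) := by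
    rw [tendsto_iff_dist_tendsto_zero]
    have hb : ∀ k : ℕ, dist (φ (wk k)) (∫ z, v z ∂τ) ≤ (1/((k:ℝ)+1)) * (τ Set.univ).toReal := by
      intro k
      rw [Real.dist_eq]
      exact stepB k
    have h0 : Tendsto (fun k : ℕ => (1/((k:ℝ)+1)) * (τ Set.univ).toReal) atTop (𝓝 0) := by
      have := tendsto_one_div_add_atTop_nhds_zero_nat.mul_const ((τ Set.univ).toReal)
      simpa using this
    exact squeeze_zero (fun k => dist_nonneg) hb h0
  exact tendsto_nhds_unique hlim1 hlim2

end BWCaux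

open BWCaux in
theorem iMeasure_bounded_weak_convergence' {Z E F : Type*} [MeasurableSpace Z]
    [NormedAddCommGroup E] [NormedSpace ℝ E] [MeasurableSpace E] [BorelSpace E]
    [NormedAddCommGroup F] [NormedSpace ℝ F] [CompleteSpace F]
    (μ : Set Z → E →L[ℝ] F) (hμ : IsIMeasure μ)
    (f : ℕ → Z → E) (g : Z → E)
    (hfm : ∀ n, Measurable (f n))
    (hfs : ∀ n, TopologicalSpace.IsSeparable (Set.range (f n)))
    (hgm : Measurable g) (hgs : TopologicalSpace.IsSeparable (Set.range g))
    (hbd : ∃ C : ℝ, ∀ n z, ‖f n z‖ ≤ C)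
    (hptw : ∀ (z : Z) (ψ : StrongDual ℝ E),
      Tendsto (fun n => ψ (f n z)) atTop (𝓝 (ψ (g z))))
    (y : ℕ → F) (w : F)
    (hy : ∀ n, HasIntegral μ (f n) (y n)) (hw : HasIntegral μ g w) :
    ∀ φ : StrongDual ℝ F, Tendsto (fun n => φ (y n)) atTop (𝓝 (φ w)) := by
  classical
  intro φ
  obtain ⟨C, hC⟩ := hbd
  have hgC : ∀ z, ‖g z‖ ≤ C := by
    intro z
    have hC0 : (0:ℝ) ≤ C := le_trans (norm_nonneg (f 0 z)) (hC 0 z)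
    apply NormedSpace.norm_le_dual_bound ℝ (g z) hC0
    intro ψ
    have h1 : Tendsto (fun n => ψ (f n z)) atTop (𝓝 (ψ (g z))) := hptw z ψ
    have h2 : ∀ n, ‖ψ (f n z)‖ ≤ C * ‖ψ‖ := by
      intro n
      calc ‖ψ (f n z)‖ ≤ ‖ψ‖ * ‖f n z‖ := ψ.le_opNorm _
      _ ≤ ‖ψ‖ * C := mul_le_mul_of_nonneg_left (hC n z) (norm_nonneg ψ)
      _ = C * ‖ψ‖ := mul_comm _ _
    exact le_of_tendsto h1.norm (Filter.Eventually.of_forall h2)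
  -- extract all approximation data
  choose gk wk hCV hclose hconv using hy
  choose ee AA hAm hAd hAU hAe hAt using fun n k => hCV n k
  obtain ⟨gkw, wkw, hCVw, hclosew, hconvw⟩ := hw
  choose eew AAw hAmw hAdw hAUw hAew hAtw using hCVw
  choose cf hcfc hcfs using hfs
  obtain ⟨cg, hcgc, hcgs⟩ := hgs
  -- the countable vector set
  set S : Set E := ((((⋃ n, cf n) ∪ cg) ∪ (⋃ n, ⋃ k, ⋃ m, {ee n k m})) ∪
      (⋃ k, ⋃ m, {eew k m})) ∪ {0} with hS
  have hScount : S.Countable := by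
    refine (((((Set.countable_iUnion hcfc).union hcgc).union ?_).union ?_).union
      (Set.countable_singleton 0))
    · exact Set.countable_iUnion (fun n => Set.countable_iUnion (fun k =>
        Set.countable_iUnion (fun m => Set.countable_singleton _)))
    · exact Set.countable_iUnion (fun k => Set.countable_iUnion (fun m =>
        Set.countable_singleton _))
  have hS0 : (0:E) ∈ S := Or.inr rfl
  obtain ⟨V, hV⟩ := hScount.exists_eq_range ⟨0, hS0⟩
  -- the rational cone generated by S
  set cmb : List (ℚ × ℕ) → E := fun l => (l.map (fun p => (p.1 : ℝ) • V p.2)).sum with hcmb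
  set W : Set E := Set.range cmb with hW
  have hW0 : (0:E) ∈ W := ⟨[], by simp [hcmb]⟩
  have hWadd : ∀ a ∈ W, ∀ b ∈ W, a + b ∈ W := by
    rintro a ⟨l, rfl⟩ b ⟨l', rfl⟩
    exact ⟨l ++ l', by simp [hcmb]⟩
  have hWsmul : ∀ (q : ℚ), ∀ a ∈ W, (q:ℝ) • a ∈ W := by
    rintro q a ⟨l, rfl⟩
    refine ⟨l.map (fun p => (q * p.1, p.2)), ?_⟩
    simp only [hcmb, List.map_map]
    rw [List.smul_sum]
    congr 1
    rw [List.map_map]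
    congr 1
    funext p
    simp only [Function.comp_apply]
    push_cast
    rw [mul_smul]
  have hSsubW : S ⊆ W := by
    intro x hx
    rw [hV] at hx
    obtain ⟨n, rfl⟩ := hx
    exact ⟨[(1, n)], by simp [hcmb]⟩
  set τ := tauM hμ φ with hτ
  -- the good measurable co-null set
  set P : Z → Prop := fun z =>
    (∀ l l' : List (ℚ × ℕ), DD hμ φ (cmb l + cmb l') z = DD hμ φ (cmb l) z + DD hμ φ (cmb l') z) ∧
    (∀ (q : ℚ) (l : List (ℚ × ℕ)), DD hμ φ ((q:ℝ) • cmb l) z = (q:ℝ) * DD hμ φ (cmb l) z) ∧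
    (∀ l : List (ℚ × ℕ), |DD hμ φ (cmb l) z| ≤ ‖cmb l‖) with hP
  have haeP : ∀ᵐ z ∂τ, P z := by
    have h1 : ∀ᵐ z ∂τ, ∀ l l' : List (ℚ × ℕ),
        DD hμ φ (cmb l + cmb l') z = DD hμ φ (cmb l) z + DD hμ φ (cmb l') z := by
      rw [MeasureTheory.ae_all_iff]
      intro l
      rw [MeasureTheory.ae_all_iff]
      intro l'
      filter_upwards [DD_add hμ φ (cmb l) (cmb l')] with z hz
      exact hz
    have h2 : ∀ᵐ z ∂τ, ∀ (q : ℚ) (l : List (ℚ × ℕ)),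
        DD hμ φ ((q:ℝ) • cmb l) z = (q:ℝ) * DD hμ φ (cmb l) z := by
      rw [MeasureTheory.ae_all_iff]
      intro q
      rw [MeasureTheory.ae_all_iff]
      intro l
      filter_upwards [DD_smul hμ φ (q:ℝ) (cmb l)] with z hz
      exact hz
    have h3 : ∀ᵐ z ∂τ, ∀ l : List (ℚ × ℕ), |DD hμ φ (cmb l) z| ≤ ‖cmb l‖ := by
      rw [MeasureTheory.ae_all_iff]
      intro l
      exact DD_bound hμ φ (cmb l)
    filter_upwards [h1, h2, h3] with z hz1 hz2 hz3
    exact ⟨hz1, hz2, hz3⟩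
  set Nbad := MeasureTheory.toMeasurable τ {z | ¬ P z} with hNbad
  have hNnull : τ Nbad = 0 := by
    rw [hNbad, MeasureTheory.measure_toMeasurable]
    exact haeP
  set G := Nbadᶜ with hG
  have hGm : MeasurableSet G := (MeasureTheory.measurableSet_toMeasurable τ _).compl
  have hGP : ∀ z ∈ G, P z := by
    intro z hz
    by_contra hc
    exact hz (MeasureTheory.subset_toMeasurable τ _ hc)
  have hGae : ∀ᵐ z ∂τ, z ∈ G := by
    rw [MeasureTheory.ae_iff]
    have : {z | ¬ z ∈ G} = Nbad := by
      ext z; simp [hG]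
    rw [this]
    exact hNnull
  -- pointwise functionals
  have hext : ∀ z, ∃ ψz : E →L[ℝ] ℝ, ‖ψz‖ ≤ 1 ∧
      (z ∈ G → ∀ a ∈ W, ψz a = DD hμ φ a z) ∧ (z ∉ G → ψz = 0) := by
    intro z
    by_cases hz : z ∈ G
    · obtain ⟨hP1, hP2, hP3⟩ := hGP z hz
      have hadd : ∀ a ∈ W, ∀ b ∈ W, DD hμ φ (a + b) z = DD hμ φ a z + DD hμ φ b z := by
        rintro a ⟨l, rfl⟩ b ⟨l', rfl⟩
        exact hP1 l l'
      have hsmul : ∀ (q : ℚ), ∀ a ∈ W, DD hμ φ ((q:ℝ) • a) z = q * DD hμ φ a z := by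
        rintro q a ⟨l, rfl⟩
        exact hP2 q l
      have hbd' : ∀ a ∈ W, |DD hμ φ a z| ≤ ‖a‖ := by
        rintro a ⟨l, rfl⟩
        exact hP3 l
      obtain ⟨ψz, h1, h2⟩ := extension_lemma W hW0 hWadd hWsmul
        (fun x => DD hμ φ x z) hadd hsmul hbd'
      exact ⟨ψz, h1, fun _ => h2, fun h => absurd hz h⟩
    · exact ⟨0, by simp, fun h => absurd h hz, fun _ => rfl⟩
  choose ψf hψ1 hψ2 hψ3 using hext
  -- measurability of evaluations on W
  have hψmeas : ∀ a ∈ W, Measurable (fun z => ψf z a) := by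
    intro a ha
    have he : (fun z => ψf z a) = G.indicator (fun z => DD hμ φ a z) := by
      funext z
      by_cases hz : z ∈ G
      · rw [Set.indicator_of_mem hz]
        exact hψ2 z hz a ha
      · rw [Set.indicator_of_notMem hz, hψ3 z hz]
        rfl
    rw [he]
    exact (DD_meas hμ φ a).indicator hGm
  -- the integral identity on W
  have hψint : ∀ a ∈ W, ∀ A : Set Z, MeasurableSet A →
      ∫ z in A, ψf z a ∂τ = φ (μ A a) := by
    intro a ha A hA
    have h1 : (fun z => ψf z a) =ᵐ[τ] DD hμ φ a := by
      filter_upwards [hGae] with z hz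
      exact hψ2 z hz a ha
    rw [MeasureTheory.integral_congr_ae (MeasureTheory.ae_restrict_of_ae h1)]
    exact setIntegral_DD hμ φ hA a
  -- representations
  have hclosW : ∀ T : Set E, T ⊆ S → T ⊆ closure W :=
    fun T hT => hT.trans (hSsubW.trans subset_closure)
  have hrepf : ∀ n, φ (y n) = ∫ z, ψf z (f n z) ∂τ := by
    intro n
    apply rep_lemma hμ φ W hW0 ψf hψ1 hψmeas hψint (f n) (hfm n) ⟨cf n, hcfc n, hcfs n⟩ ?_ (hC n)
      (y n) (gk n) (wk n) (hclose n) (hconv n) (ee n) (AA n) (hAm n) (hAd n) (hAU n)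
      (hAe n) (hAt n) ?_
    · -- range f n ⊆ closure W
      refine (hcfs n).trans (closure_mono ?_)
      refine Set.Subset.trans ?_ hSsubW
      intro x hx
      exact Or.inl (Or.inl (Or.inl (Or.inl (Set.mem_iUnion.2 ⟨n, hx⟩))))
    · intro k m
      apply hSsubW
      rw [hS]
      exact Or.inl (Or.inl (Or.inr (Set.mem_iUnion.2 ⟨n, Set.mem_iUnion.2 ⟨k,
        Set.mem_iUnion.2 ⟨m, rfl⟩⟩⟩)))
  have hrepg : φ w = ∫ z, ψf z (g z) ∂τ := by
    apply rep_lemma hμ φ W hW0 ψf hψ1 hψmeas hψint g hgm ⟨cg, hcgc, hcgs⟩ ?_ hgC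
      w gkw wkw hclosew hconvw eew AAw hAmw hAdw hAUw hAew hAtw ?_
    · refine hcgs.trans (closure_mono ?_)
      refine Set.Subset.trans ?_ hSsubW
      intro x hx
      exact Or.inl (Or.inl (Or.inl (Or.inr hx)))
    · intro k m
      apply hSsubW
      rw [hS]
      exact Or.inl (Or.inr (Set.mem_iUnion.2 ⟨k, Set.mem_iUnion.2 ⟨m, rfl⟩⟩))
  -- dominated convergence
  have hgoal : Tendsto (fun n => ∫ z, ψf z (f n z) ∂τ) atTop (𝓝 (∫ z, ψf z (g z) ∂τ)) := by
    apply MeasureTheory.tendsto_integral_of_dominated_convergence (fun _ => C)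
    · intro n
      have hrange : Set.range (f n) ⊆ closure W := by
        refine (hcfs n).trans (closure_mono ?_)
        refine Set.Subset.trans ?_ hSsubW
        intro x hx
        exact Or.inl (Or.inl (Or.inl (Or.inl (Set.mem_iUnion.2 ⟨n, hx⟩))))
      exact (psi_comp_meas W ψf hψ1 hψmeas hW0 (f n) (hfm n) ⟨cf n, hcfc n, hcfs n⟩ hrange).aestronglyMeasurable
    · exact MeasureTheory.integrable_const C
    · intro n
      filter_upwards with z
      simpa [Real.norm_eq_abs] using (psi_bound _ (hψ1 z) _).trans (hC n z)
    · filter_upwards with z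
      exact hptw z (ψf z)
  have heq : (fun n => φ (y n)) = fun n => ∫ z, ψf z (f n z) ∂τ := funext hrepf
  rw [heq, hrepg]
  exact hgoal
/-- Bounded Weak Convergence Theorem for i-measures: if uniformly bounded measurable
functions with separable ranges converge pointwise in the weak topology of `E`, their
integrals converge in the weak topology of `F`. -/
theorem iMeasure_bounded_weak_convergence {Z E F : Type*} [MeasurableSpace Z]
    [NormedAddCommGroup E] [NormedSpace ℝ E] [MeasurableSpace E] [BorelSpace E]
    [NormedAddCommGroup F] [NormedSpace ℝ F] [CompleteSpace F]
    (μ : Set Z → E →L[ℝ] F) (hμ : IsIMeasure μ)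
    (f : ℕ → Z → E) (g : Z → E)
    (hfm : ∀ n, Measurable (f n))
    (hfs : ∀ n, TopologicalSpace.IsSeparable (Set.range (f n)))
    (hgm : Measurable g) (hgs : TopologicalSpace.IsSeparable (Set.range g))
    (hbd : ∃ C : ℝ, ∀ n z, ‖f n z‖ ≤ C)
    (hptw : ∀ (z : Z) (ψ : StrongDual ℝ E),
      Tendsto (fun n => ψ (f n z)) atTop (𝓝 (ψ (g z))))
    (y : ℕ → F) (w : F)
    (hy : ∀ n, HasIntegral μ (f n) (y n)) (hw : HasIntegral μ g w) :
    ∀ φ : StrongDual ℝ F, Tendsto (fun n => φ (y n)) atTop (𝓝 (φ w)) := by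
  exact iMeasure_bounded_weak_convergence' μ hμ f g hfm hfs hgm hgs hbd hptw y w hy hw
end

section
/- Let Y be a compact metrisable space, E a Banach space, and (uₙ) a sequence of bounded Borel measurable functions Y → E with separable ranges. Then the set S of all y ∈ Y for which uₙ(y) → 0 in the weak topology of E is coanalytic. -/
open Filter Topology TopologicalSpace Metric Set NormedSpace

private lemma polish_of_compact_metrizable' (X : Type*) [TopologicalSpace X] [CompactSpace X]
    [MetrizableSpace X] : PolishSpace X := by
  letI := metrizableSpaceMetric X
  infer_instance

private lemma not_tendsto_iff_aux (f : ℕ → ℝ) :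
    ¬ Tendsto f atTop (𝓝 0) ↔ ∃ ε > 0, ∀ N, ∃ n ≥ N, ε ≤ |f n| := by
  rw [Metric.tendsto_atTop]
  push_neg
  simp [Real.dist_eq, not_lt]

set_option maxHeartbeats 1000000 in
/-- If `Y` is compact metrisable and `(uₙ)` are bounded Borel functions `Y → E` with
separable ranges, then the set of `y` where `uₙ(y) → 0` weakly is coanalytic, i.e. its
complement is analytic. -/
theorem weak_null_set_coanalytic {Y E : Type*}
    [TopologicalSpace Y] [CompactSpace Y] [TopologicalSpace.MetrizableSpace Y]
    [MeasurableSpace Y] [BorelSpace Y]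
    [NormedAddCommGroup E] [NormedSpace ℝ E] [MeasurableSpace E] [BorelSpace E]
    (u : ℕ → Y → E) (hm : ∀ n, Measurable (u n))
    (hs : ∀ n, TopologicalSpace.IsSeparable (Set.range (u n)))
    (hb : ∀ n, ∃ C : ℝ, ∀ y, ‖u n y‖ ≤ C) :
    MeasureTheory.AnalyticSet
      ({y : Y | ∀ ψ : StrongDual ℝ E,
        Tendsto (fun n => ψ (u n y)) atTop (𝓝 0)}ᶜ) := by
  classical
  haveI : PolishSpace Y := polish_of_compact_metrizable' Y
  -- the separable subspace spanned by the ranges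
  set F : Submodule ℝ E := Submodule.span ℝ (⋃ n, Set.range (u n)) with hF
  have hFsep : IsSeparable (F : Set E) :=
    (TopologicalSpace.isSeparable_iUnion.2 hs).span
  haveI : SeparableSpace F := hFsep.separableSpace
  haveI : Nonempty F := ⟨0⟩
  haveI : SecondCountableTopology F := UniformSpace.secondCountable_of_separable F
  obtain ⟨d, hd⟩ := TopologicalSpace.exists_dense_seq F
  have hmem : ∀ n y, u n y ∈ F := fun n y =>
    Submodule.subset_span (Set.mem_iUnion.2 ⟨n, Set.mem_range_self y⟩)
  -- the dual unit ball with the weak-star topology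
  set X : Set (WeakDual ℝ F) := WeakDual.toStrongDual ⁻¹' Metric.closedBall (0 : StrongDual ℝ F) 1 with hX
  haveI : CompactSpace X := isCompact_iff_compactSpace.1 (WeakDual.isCompact_closedBall (0 : StrongDual ℝ F) 1)
  have hjcont : Continuous (fun φ : X => fun k : ℕ => (φ : WeakDual ℝ F) (d k)) := by
    refine continuous_pi fun k => ?_
    exact (WeakDual.eval_continuous (d k)).comp continuous_subtype_val
  have hjinj : Function.Injective (fun φ : X => fun k : ℕ => (φ : WeakDual ℝ F) (d k)) := by
    intro φ ψ h
    ext1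
    apply DFunLike.coe_injective
    refine Continuous.ext_on hd
      (WeakDual.toStrongDual (φ : WeakDual ℝ F)).continuous
      (WeakDual.toStrongDual (ψ : WeakDual ℝ F)).continuous ?_
    rintro _ ⟨k, rfl⟩
    exact congrFun h k
  haveI : PolishSpace X := (hjcont.isClosedEmbedding hjinj).polishSpace
  letI : MeasurableSpace X := borel X
  haveI : BorelSpace X := ⟨rfl⟩
  -- norms of elements of X
  have hXnorm : ∀ φ : X, ‖WeakDual.toStrongDual (φ : WeakDual ℝ F)‖ ≤ 1 := by
    intro φ
    exact (mem_closedBall_zero_iff (E := StrongDual ℝ F)).1 (Set.mem_preimage.1 φ.2)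
  -- joint continuity of evaluation on F × X
  have geval : Continuous (fun q : F × X => (q.2 : WeakDual ℝ F) q.1) := by
    rw [continuous_iff_continuousAt]
    rintro ⟨x₀, φ₀⟩
    rw [ContinuousAt, tendsto_iff_norm_sub_tendsto_zero]
    have hbd : ∀ q : F × X, ‖(q.2 : WeakDual ℝ F) q.1 - (φ₀ : WeakDual ℝ F) x₀‖ ≤
        ‖q.1 - x₀‖ + ‖(q.2 : WeakDual ℝ F) x₀ - (φ₀ : WeakDual ℝ F) x₀‖ := by
      rintro ⟨x, φ⟩
      have h1 : (φ : WeakDual ℝ F) x - (φ₀ : WeakDual ℝ F) x₀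
          = (WeakDual.toStrongDual (φ : WeakDual ℝ F)) (x - x₀)
            + ((φ : WeakDual ℝ F) x₀ - (φ₀ : WeakDual ℝ F) x₀) := by
        simp only [map_sub, WeakDual.toStrongDual_apply]
        ring
      rw [h1]
      refine (norm_add_le _ _).trans (add_le_add ?_ le_rfl)
      calc ‖(WeakDual.toStrongDual (φ : WeakDual ℝ F)) (x - x₀)‖
          ≤ ‖WeakDual.toStrongDual (φ : WeakDual ℝ F)‖ * ‖x - x₀‖ :=
            ContinuousLinearMap.le_opNorm _ _
        _ ≤ 1 * ‖x - x₀‖ := by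
            exact mul_le_mul_of_nonneg_right (hXnorm φ) (norm_nonneg _)
        _ = ‖x - x₀‖ := one_mul _
    refine squeeze_zero (fun q => norm_nonneg _) hbd ?_
    have hg : Continuous (fun q : F × X =>
        ‖q.1 - x₀‖ + ‖(q.2 : WeakDual ℝ F) x₀ - (φ₀ : WeakDual ℝ F) x₀‖) := by
      apply Continuous.add
      · exact (continuous_fst.sub continuous_const).norm
      · exact ((((WeakDual.eval_continuous x₀).comp continuous_subtype_val).comp
          continuous_snd).sub continuous_const).norm
    have h0 := hg.tendsto (x₀, φ₀)
    simpa using h0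
  -- measurable evaluation functions
  have hgm : ∀ n : ℕ,
      Measurable (fun p : Y × X => (p.2 : WeakDual ℝ F) ⟨u n p.1, hmem n p.1⟩) := by
    intro n
    have hv : Measurable (fun y : Y => (⟨u n y, hmem n y⟩ : F)) := (hm n).subtype_mk
    exact geval.measurable.comp ((hv.comp measurable_fst).prodMk measurable_snd)
  -- the Borel set
  set A : Set (Y × X) := ⋃ k : ℕ, ⋂ N : ℕ, ⋃ n : ℕ, ⋃ (_ : N ≤ n),
      {p : Y × X | 1/((k : ℝ)+1) ≤ |(p.2 : WeakDual ℝ F) ⟨u n p.1, hmem n p.1⟩|} with hA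
  have hAm : MeasurableSet A := by
    refine MeasurableSet.iUnion fun k => MeasurableSet.iInter fun N =>
      MeasurableSet.iUnion fun n => MeasurableSet.iUnion fun _ => ?_
    exact measurableSet_le measurable_const (hgm n).abs
  have hAan : MeasureTheory.AnalyticSet (Prod.fst '' A) :=
    hAm.analyticSet.image_of_continuous continuous_fst
  have hkey : {y : Y | ∀ ψ : StrongDual ℝ E,
      Tendsto (fun n => ψ (u n y)) atTop (𝓝 0)}ᶜ = Prod.fst '' A := by
    ext y
    simp only [Set.mem_compl_iff, Set.mem_setOf_eq, not_forall, Set.mem_image, hA,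
      Set.mem_iUnion, Set.mem_iInter]
    constructor
    · rintro ⟨ψ, hψ⟩
      set φ₀ : StrongDual ℝ F := ψ.comp (Submodule.subtypeL F) with hφ₀
      set c : ℝ := ‖φ₀‖ + 1 with hc
      have hcpos : (0:ℝ) < c := by positivity
      set φ : StrongDual ℝ F := c⁻¹ • φ₀ with hφ
      have hφnorm : ‖φ‖ ≤ 1 := by
        rw [hφ]
        refine (ContinuousLinearMap.opNorm_smul_le _ _).trans ?_
        rw [norm_inv, Real.norm_eq_abs, abs_of_pos hcpos]
        rw [inv_mul_le_iff₀ hcpos, mul_one, hc]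
        linarith [norm_nonneg φ₀]
      have hmemX : StrongDual.toWeakDual φ ∈ X := by
        rw [hX, Set.mem_preimage]
        refine (mem_closedBall_zero_iff (E := StrongDual ℝ F)).2 ?_
        simpa using hφnorm
      have hval : ∀ n, (StrongDual.toWeakDual φ) (⟨u n y, hmem n y⟩ : F) = c⁻¹ * ψ (u n y) := by
        intro n
        have h4 := WeakDual.toStrongDual_apply (StrongDual.toWeakDual φ) (⟨u n y, hmem n y⟩ : F)
        rw [show WeakDual.toStrongDual (StrongDual.toWeakDual φ) = φ from
          LinearEquiv.symm_apply_apply _ _] at h4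
        rw [← h4, hφ, hφ₀]
        simp
      have hnt : ¬ Tendsto (fun n => c⁻¹ * ψ (u n y)) atTop (𝓝 0) := by
        intro h
        apply hψ
        have h2 := h.const_mul c
        simp only [mul_zero] at h2
        refine h2.congr fun n => ?_
        field_simp
      rw [not_tendsto_iff_aux] at hnt
      obtain ⟨ε, hε, hεN⟩ := hnt
      obtain ⟨k, hk⟩ := exists_nat_one_div_lt hε
      refine ⟨(y, ⟨StrongDual.toWeakDual φ, hmemX⟩), ⟨k, fun N => ?_⟩, rfl⟩
      obtain ⟨n, hn, hεn⟩ := hεN N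
      refine ⟨n, hn, ?_⟩
      rw [hval n]
      exact le_trans (le_of_lt hk) hεn
    · rintro ⟨⟨y', φ⟩, ⟨k, hk⟩, rfl⟩
      obtain ⟨g, hg, -⟩ :=
        exists_extension_norm_eq F (WeakDual.toStrongDual (φ : WeakDual ℝ F))
      refine ⟨g, ?_⟩
      rw [not_tendsto_iff_aux]
      refine ⟨1/((k:ℝ)+1), by positivity, fun N => ?_⟩
      obtain ⟨n, hn, hval⟩ := hk N
      refine ⟨n, hn, ?_⟩
      have h3 := hg ⟨u n y', hmem n y'⟩
      rw [WeakDual.toStrongDual_apply] at h3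
      exact h3 ▸ hval
  rw [hkey]
  exact hAan
end

section
/- Let W be a linear subspace of a dual Banach space F* that is sequentially closed in the weak* topology and has the property that every weak* vector measure ν : 𝓜 → F* with range in W is a (norm-countably-additive) vector measure. Then every weak* i-measure μ : 𝓜 → L(E,W) ⊆ L(E,F*) is an i-measure. -/
open Filter Topology ENNReal

/-- A *weak\* vector measure* with values in `F*`: countably additive against every `f ∈ F`. -/
def IsWeakStarVectorMeasure {Z F : Type*} [MeasurableSpace Z]
    [NormedAddCommGroup F] [NormedSpace ℝ F] (ν : Set Z → StrongDual ℝ F) : Prop :=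
  ∀ A : ℕ → Set Z, (∀ n, MeasurableSet (A n)) → Pairwise (Function.onFun Disjoint A) →
    ∀ f : F, Tendsto (fun N => ∑ n ∈ Finset.range N, ν (A n) f) atTop (𝓝 (ν (⋃ n, A n) f))

/-- A norm-countably-additive vector measure. -/
def IsVectorMeasure {Z E : Type*} [MeasurableSpace Z] [NormedAddCommGroup E]
    (ν : Set Z → E) : Prop :=
  ∀ A : ℕ → Set Z, (∀ n, MeasurableSet (A n)) → Pairwise (Function.onFun Disjoint A) →
    Tendsto (fun N => ∑ n ∈ Finset.range N, ν (A n)) atTop (𝓝 (ν (⋃ n, A n)))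

/-- A *weak\* i-measure*: for each `f ∈ F`, `A ↦ ⟨f, μ(A)(·)⟩` is an i-measure. -/
def IsWeakStarIMeasure {Z E F : Type*} [MeasurableSpace Z]
    [NormedAddCommGroup E] [NormedSpace ℝ E] [NormedAddCommGroup F] [NormedSpace ℝ F]
    (μ : Set Z → E →L[ℝ] StrongDual ℝ F) : Prop :=
  ∀ f : F, IsIMeasure fun A => (μ A).flip f


section Aux

variable {Z E F : Type*} [MeasurableSpace Z]
    [NormedAddCommGroup E] [NormedSpace ℝ E]
    [NormedAddCommGroup F] [NormedSpace ℝ F]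

lemma aux_zero (μ : Set Z → E →L[ℝ] StrongDual ℝ F) (hμ : IsWeakStarIMeasure μ)
    (x : E) (f : F) : μ ∅ x f = 0 := by
  have h := (hμ f).1 (fun _ => (∅ : Set Z)) (fun _ => MeasurableSet.empty)
    (fun i j _ => by simp [Function.onFun]) x
  simp only [Set.iUnion_empty, ContinuousLinearMap.flip_apply] at h
  set c := μ (∅ : Set Z) x f with hc
  have h1 : Tendsto (fun N : ℕ => (N : ℝ) * c) atTop (𝓝 c) := by
    simpa [Finset.sum_const, nsmul_eq_mul] using h
  have h2 : Tendsto (fun N : ℕ => ((N + 1 : ℕ) : ℝ) * c) atTop (𝓝 c) :=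
    h1.comp (tendsto_add_atTop_nat 1)
  have h3 := h2.sub h1
  have h4 : (fun N : ℕ => ((N + 1 : ℕ) : ℝ) * c - (N : ℝ) * c) = fun _ => c := by
    funext N; push_cast; ring
  rw [h4, sub_self] at h3
  have := tendsto_nhds_unique tendsto_const_nhds h3
  linarith

lemma aux_summable (μ : Set Z → E →L[ℝ] StrongDual ℝ F) (hμ : IsWeakStarIMeasure μ)
    (f : F) (D : ℕ → Set Z) (hD : ∀ n, MeasurableSet (D n))
    (hdisj : Pairwise (Function.onFun Disjoint D)) (x : ℕ → E) (C : ℝ)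
    (hx : ∀ n, ‖x n‖ ≤ C) : Summable (fun n => μ (D n) (x n) f) := by
  classical
  set a : ℕ → ℝ := fun n => μ (D n) (x n) f with ha
  set x' : ℕ → E := fun n => if 0 ≤ a n then x n else -x n with hx'
  obtain ⟨y, hy⟩ := (hμ f).2 D hD hdisj x' ⟨C, fun n => by
    by_cases h : 0 ≤ a n <;> simp [hx', h, hx n]⟩
  have hterm : ∀ n, (μ (D n)).flip f (x' n) = |a n| := by
    intro n
    by_cases h : 0 ≤ a n
    · simp [hx', h, ContinuousLinearMap.flip_apply, ← ha, abs_of_nonneg h]; rfl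
    · simp only [hx', if_neg h, ContinuousLinearMap.flip_apply, map_neg,
        ContinuousLinearMap.neg_apply]
      rw [abs_of_neg (lt_of_not_ge h)]
  have hy' : Tendsto (fun N => ∑ n ∈ Finset.range N, |a n|) atTop (𝓝 y) := by
    refine hy.congr fun N => Finset.sum_congr rfl fun n _ => hterm n
  have hmono : Monotone fun N => ∑ n ∈ Finset.range N, |a n| := by
    intro i j hij
    exact Finset.sum_le_sum_of_subset_of_nonneg (Finset.range_subset_range.2 hij)
      (fun n _ _ => abs_nonneg _)
  have hle : ∀ N, ∑ n ∈ Finset.range N, |a n| ≤ y := hmono.ge_of_tendsto hy'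
  have habs : Summable fun n => |a n| :=
    summable_of_sum_range_le (fun n => abs_nonneg _) hle
  exact habs.of_abs

end Aux

/-- If `W ⊆ F*` is weak* sequentially closed and every `W`-valued weak* vector measure is a
vector measure, then every weak* i-measure with values in `L(E,W)` is an i-measure. -/
theorem weakStarIMeasure_isIMeasure {Z E F : Type*} [MeasurableSpace Z]
    [NormedAddCommGroup E] [NormedSpace ℝ E]
    [NormedAddCommGroup F] [NormedSpace ℝ F] [CompleteSpace F]
    (W : Submodule ℝ (StrongDual ℝ F))
    (hseq : ∀ (φ : ℕ → StrongDual ℝ F) (ψ : StrongDual ℝ F),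
      (∀ n, φ n ∈ W) → (∀ f : F, Tendsto (fun n => φ n f) atTop (𝓝 (ψ f))) → ψ ∈ W)
    (hvm : ∀ ν : Set Z → StrongDual ℝ F, IsWeakStarVectorMeasure ν →
      (∀ A : Set Z, MeasurableSet A → ν A ∈ W) → IsVectorMeasure ν)
    (μ : Set Z → E →L[ℝ] StrongDual ℝ F) (hμ : IsWeakStarIMeasure μ)
    (hrange : ∀ A : Set Z, MeasurableSet A → ∀ x : E, μ A x ∈ W) :
    IsIMeasure μ := by
  classical
  constructor
  · -- strong countable additivity
    intro A hA hdisj x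
    have hν : IsWeakStarVectorMeasure (fun B => μ B x) := by
      intro B hB hBdisj f
      simpa [ContinuousLinearMap.flip_apply] using (hμ f).1 B hB hBdisj x
    exact hvm _ hν (fun B hB => hrange B hB x) A hA hdisj
  · -- independent convergence
    intro A hA hAdisj x hxb
    obtain ⟨C, hC⟩ := hxb
    set g : Set Z → F → ℝ := fun B f => ∑' n, μ (B ∩ A n) (x n) f with hg
    have hsum : ∀ (B : Set Z), MeasurableSet B → ∀ f : F,
        Summable (fun n => μ (B ∩ A n) (x n) f) := by
      intro B hB f
      exact aux_summable μ hμ f (fun n => B ∩ A n) (fun n => hB.inter (hA n))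
        (fun i j hij => ((hAdisj hij).mono Set.inter_subset_right Set.inter_subset_right))
        x C hC
    set φ : Set Z → ℕ → StrongDual ℝ F :=
      fun B N => ∑ n ∈ Finset.range N, μ (B ∩ A n) (x n) with hφdef
    have hφ : ∀ B : Set Z, MeasurableSet B →
        Tendsto (fun N (f : F) => φ B N f) atTop (𝓝 (g B)) := by
      intro B hB
      rw [tendsto_pi_nhds]
      intro f
      have := (hsum B hB f).hasSum.tendsto_sum_nat
      simpa [hφdef, ContinuousLinearMap.sum_apply] using this
    set ν : Set Z → StrongDual ℝ F := fun B =>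
      if hB : MeasurableSet B then continuousLinearMapOfTendsto (φ B) (hφ B hB) else 0
      with hνdef
    have hν_apply : ∀ B, MeasurableSet B → ∀ f : F, ν B f = g B f := by
      intro B hB f
      simp only [hνdef, dif_pos hB]
      rfl
    have hνW : ∀ B : Set Z, MeasurableSet B → ν B ∈ W := by
      intro B hB
      refine hseq (φ B) (ν B) (fun N => Submodule.sum_mem W fun n _ =>
        hrange _ (hB.inter (hA n)) _) ?_
      intro f
      rw [hν_apply B hB f]
      have := (hsum B hB f).hasSum.tendsto_sum_nat
      simpa [hφdef, ContinuousLinearMap.sum_apply] using this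
    have hνmeas : IsWeakStarVectorMeasure ν := by
      intro B hB hBdisj f
      set a : ℕ × ℕ → ℝ := fun p => μ (B p.1 ∩ A p.2) (x p.2) f with hadef
      have hdd : Summable a := by
        set e : ℕ ≃ ℕ × ℕ := (Denumerable.eqv (ℕ × ℕ)).symm with he
        rw [← e.summable_iff]
        refine aux_summable μ hμ f (fun n => B (e n).1 ∩ A (e n).2)
          (fun n => (hB _).inter (hA _)) ?_ (fun n => x (e n).2) C (fun n => hC _)
        intro n m hnm
        have hne : e n ≠ e m := fun h => hnm (e.injective h)
        by_cases h1 : (e n).1 = (e m).1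
        · have h2 : (e n).2 ≠ (e m).2 := fun h => hne (Prod.ext h1 h)
          exact (hAdisj h2).mono Set.inter_subset_right Set.inter_subset_right
        · exact (hBdisj h1).mono Set.inter_subset_left Set.inter_subset_left
      -- rows: HasSum (fun n => a (k, n)) (ν (B k) f)
      have hrow : ∀ k, HasSum (fun n => a (k, n)) (ν (B k) f) := by
        intro k
        rw [hν_apply _ (hB k) f]
        exact (hsum (B k) (hB k) f).hasSum
      set S : ℝ := ∑' p, a p with hS
      have htot : HasSum a S := hdd.hasSum
      have hKsum : HasSum (fun k => ν (B k) f) S :=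
        htot.prod_fiberwise hrow
      -- columns: HasSum (fun k => a (k, n)) (μ ((⋃ k, B k) ∩ A n) (x n) f)
      have hswap : Summable fun p : ℕ × ℕ => a p.swap := by
        rw [← (Equiv.prodComm ℕ ℕ).summable_iff]
        exact hdd
      have hcol : ∀ n, HasSum (fun k => a (k, n)) (μ ((⋃ k, B k) ∩ A n) (x n) f) := by
        intro n
        have hcs : Summable fun k => a (k, n) := hswap.prod_factor n
        have h1 := hcs.hasSum.tendsto_sum_nat
        have h2 := (hμ f).1 (fun k => B k ∩ A n)
          (fun k => (hB k).inter (hA n))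
          (fun i j hij => (hBdisj hij).mono Set.inter_subset_left Set.inter_subset_left)
          (x n)
        simp only [ContinuousLinearMap.flip_apply] at h2
        have heq : (⋃ k, B k ∩ A n) = (⋃ k, B k) ∩ A n := by
          rw [Set.iUnion_inter]
        rw [heq] at h2
        have : (∑' k, a (k, n)) = μ ((⋃ k, B k) ∩ A n) (x n) f :=
          tendsto_nhds_unique h1 h2
        exact this ▸ hcs.hasSum
      have htot' : HasSum (fun p : ℕ × ℕ => a p.swap) S := by
        have := ((Equiv.prodComm ℕ ℕ).hasSum_iff).2 htot
        exact this
      have hNsum : HasSum (fun n => μ ((⋃ k, B k) ∩ A n) (x n) f) S :=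
        htot'.prod_fiberwise hcol
      have hfinal : ν (⋃ k, B k) f = S := by
        rw [hν_apply _ (MeasurableSet.iUnion hB) f]
        exact hNsum.tsum_eq.symm ▸ rfl
      rw [hfinal]
      exact hKsum.tendsto_sum_nat
    have hνvm := hvm ν hνmeas (fun B hB => hνW B hB)
    have hfin := hνvm A hA hAdisj
    have hAeq : ∀ m, ν (A m) = μ (A m) (x m) := by
      intro m
      ext f
      rw [hν_apply _ (hA m) f]
      have hzero : ∀ n, n ≠ m → μ (A m ∩ A n) (x n) f = 0 := by
        intro n hnm
        have hd : Disjoint (A m) (A n) := hAdisj (Ne.symm hnm)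
        rw [Set.disjoint_iff_inter_eq_empty.1 hd]
        exact aux_zero μ hμ _ f
      have := tsum_eq_single (L := SummationFilter.unconditional ℕ) (f := fun n => μ (A m ∩ A n) (x n) f) m hzero
      simp only [hg]
      rw [this]
      simp
    refine ⟨ν (⋃ n, A n), ?_⟩
    simpa [hAeq] using hfin
end

section
/- For every infinite second countable locally compact Hausdorff space Ω, the Banach space C₀(Ω,ℝ) is not variationally sequentially complete. In particular, c₀ and C([0,1],ℝ) are not vsc. -/
open Filter Topology ZeroAtInfty

open Filter Topology Set ZeroAtInfty



lemma exists_ad_family : ∃ A : ℝ → Set ℕ, (∀ r, (A r).Infinite) ∧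
    (∀ r s : ℝ, r ≠ s → (A r ∩ A s).Finite) := by
  have hq : ∀ (r : ℝ) (n : ℕ), ∃ t : ℚ, r - 1/(n+1) < (t:ℝ) ∧ (t:ℝ) < r := by
    intro r n
    refine exists_rat_btwn ?_
    have : (0:ℝ) < 1/(n+1) := by positivity
    linarith
  choose q hq1 hq2 using hq
  -- the set of indices with value ≤ c is finite, for c < r
  have hfin : ∀ (r c : ℝ), c < r → {n : ℕ | (q r n : ℝ) ≤ c}.Finite := by
    intro r c h
    obtain ⟨N, hN⟩ := exists_nat_one_div_lt (sub_pos.2 h)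
    refine (Set.finite_Iic N).subset ?_
    intro n hn
    simp only [Set.mem_setOf_eq] at hn
    have h1 : r - c < 1/((n:ℝ)+1) := by have := hq1 r n; linarith
    have h2 : (1:ℝ)/((N:ℝ)+1) < 1/((n:ℝ)+1) := lt_trans hN h1
    have h3 : (n:ℝ) + 1 < (N:ℝ) + 1 := by
      have := (div_lt_div_iff₀ (by positivity) (by positivity)).1 h2
      linarith
    have : n < N := by exact_mod_cast (by linarith : (n:ℝ) < N)
    exact Set.mem_Iic.2 this.le
  have hrange : ∀ r, (Set.range (q r)).Infinite := by
    intro r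
    by_contra hf
    rw [Set.not_infinite] at hf
    have hne : (Set.range (q r)).Nonempty := ⟨q r 0, Set.mem_range_self 0⟩
    obtain ⟨t₀, ht₀, hmax⟩ := Set.Finite.exists_maximalFor (fun t : ℚ => (t:ℝ)) _ hf hne
    have huniv : {n : ℕ | (q r n : ℝ) ≤ (t₀:ℝ)} = Set.univ := by
      ext n
      simp only [Set.mem_setOf_eq, Set.mem_univ, iff_true]
      by_contra hlt
      push_neg at hlt
      have := hmax (Set.mem_range_self n) hlt.le
      exact absurd hlt (not_lt.2 this)
    obtain ⟨n₀, rfl⟩ := ht₀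
    have hfu := hfin r ((q r n₀ : ℚ):ℝ) (hq2 r n₀)
    rw [huniv] at hfu
    exact Set.infinite_univ hfu
  -- almost disjointness, first for r < s
  have haux : ∀ r s : ℝ, r < s →
      (Set.range (fun n => Encodable.encode (q r n)) ∩
       Set.range (fun n => Encodable.encode (q s n))).Finite := by
    intro r s hrs
    have hinj : Function.Injective (Encodable.encode : ℚ → ℕ) := Encodable.encode_injective
    have him : Set.range (fun n => Encodable.encode (q r n)) ∩
        Set.range (fun n => Encodable.encode (q s n)) =
        Encodable.encode '' (Set.range (q r) ∩ Set.range (q s)) := by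
      rw [Set.image_inter hinj, ← Set.range_comp, ← Set.range_comp]
      rfl
    rw [him]
    refine Set.Finite.image _ ?_
    have hsub : Set.range (q r) ∩ Set.range (q s) ⊆
        q s '' {n : ℕ | ((q s n : ℚ):ℝ) ≤ r} := by
      rintro t ⟨⟨nr, rfl⟩, ⟨ns, hns⟩⟩
      refine ⟨ns, ?_, hns⟩
      simp only [Set.mem_setOf_eq]
      rw [hns]
      exact (hq2 r nr).le
    exact ((hfin s r hrs).image _).subset hsub
  have hrange' : ∀ r, (Set.range (fun n => Encodable.encode (q r n))).Infinite := by
    intro r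
    have : Set.range (fun n => Encodable.encode (q r n)) =
        Encodable.encode '' (Set.range (q r)) := by
      rw [← Set.range_comp]; rfl
    rw [this]
    exact (hrange r).image (Encodable.encode_injective.injOn)
  refine ⟨fun r => Set.range (fun n => Encodable.encode (q r n)), hrange', ?_⟩
  · intro r s hrs
    rcases lt_or_gt_of_ne hrs with h | h
    · exact haux r s h
    · rw [Set.inter_comm]; exact haux s r h



lemma exists_bumps (Ω : Type*) [TopologicalSpace Ω] [LocallyCompactSpace Ω] [T2Space Ω]
    [SecondCountableTopology Ω] [Infinite Ω] :
    ∃ (x : ℕ → Ω) (φ : ℕ → C₀(Ω, ℝ)),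
      (∀ k, φ k (x k) = 1) ∧
      (∀ k y, φ k y ∈ Set.Icc (0:ℝ) 1) ∧
      (∀ j k, j ≠ k → ∀ y, φ j y = 0 ∨ φ k y = 0) ∧
      (∀ g : C₀(Ω, ℝ), ∃ c : ℝ, Tendsto (fun k => g (x k)) atTop (𝓝 c)) := by
  by_cases hcomp : CompactSpace Ω
  · -- compact case
    letI : MetricSpace Ω := TopologicalSpace.metrizableSpaceMetric Ω
    obtain ⟨xs, -, σ, hσ, hσtend⟩ :=
      isCompact_univ.tendsto_subseq (x := fun n => Infinite.natEmbedding Ω n)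
        (fun n => Set.mem_univ _)
    have hyinj : Function.Injective (fun j => Infinite.natEmbedding Ω (σ j)) :=
      (Infinite.natEmbedding Ω).injective.comp hσ.injective
    have hnear : ∀ ε : ℝ, 0 < ε → ∃ w : Ω, w ≠ xs ∧ dist w xs < ε := by
      intro ε hε
      obtain ⟨N, hN⟩ := Metric.tendsto_atTop.1 hσtend ε hε
      rcases eq_or_ne (Infinite.natEmbedding Ω (σ N)) xs with h | h
      · refine ⟨Infinite.natEmbedding Ω (σ (N+1)), fun h' => ?_, hN _ (Nat.le_succ N)⟩
        have := hyinj (h'.trans h.symm)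
        omega
      · exact ⟨_, h, hN N le_rfl⟩
    choose pt hptne hptlt using hnear
    let seq : ℕ → {w : Ω // w ≠ xs} := fun n => Nat.rec
      (⟨pt 1 one_pos, hptne 1 one_pos⟩ : {w : Ω // w ≠ xs})
      (fun _ prev => ⟨pt (dist prev.1 xs / 4)
          (by have := dist_pos.2 prev.2; linarith),
        hptne _ _⟩) n
    set x : ℕ → Ω := fun k => (seq k).1 with hxdef
    have hd0 : ∀ k, 0 < dist (x k) xs := fun k => dist_pos.2 (seq k).2
    have hdrec : ∀ k, dist (x (k+1)) xs < dist (x k) xs / 4 := by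
      intro k
      exact hptlt _ _
    have hdlt : ∀ k j, j < k → dist (x k) xs < dist (x j) xs / 4 := by
      intro k
      induction k with
      | zero => omega
      | succ n ih =>
        intro j hj
        rcases Nat.lt_succ_iff_lt_or_eq.1 hj with h | rfl
        · have h1 := hdrec n
          have h2 := ih j h
          have h3 := hd0 n
          linarith
        · exact hdrec j
    -- bump functions
    have hbump : ∀ k : ℕ, ∃ f : C(Ω, ℝ), f (x k) = 1 ∧ (∀ y, f y ∈ Set.Icc (0:ℝ) 1) ∧
        HasCompactSupport f ∧ ∀ y ∉ Metric.ball (x k) (dist (x k) xs / 4), f y = 0 := by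
      intro k
      obtain ⟨f, hf1, hf0, hfc, hficc⟩ := exists_continuous_one_zero_of_isCompact
        (isCompact_singleton (x := x k))
        ((Metric.isOpen_ball (x := x k) (ε := dist (x k) xs / 4)).isClosed_compl)
        (by
          rw [Set.disjoint_singleton_left, Set.notMem_compl_iff]
          exact Metric.mem_ball_self (by have := hd0 k; linarith))
      exact ⟨f, hf1 rfl, hficc, hfc, fun y hy => hf0 hy⟩
    choose f hf1 hficc hfcs hf0 using hbump
    refine ⟨x, fun k => ⟨f k, (hfcs k).is_zero_at_infty⟩, ?_, ?_, ?_, ?_⟩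
    · intro k; exact hf1 k
    · intro k y; exact hficc k y
    · -- disjointness
      have hball : ∀ j k, j < k →
          Metric.ball (x j) (dist (x j) xs / 4) ∩ Metric.ball (x k) (dist (x k) xs / 4) = ∅ := by
        intro j k hjk
        ext y
        simp only [Set.mem_inter_iff, Metric.mem_ball, Set.mem_empty_iff_false, iff_false, not_and]
        intro hyj
        set dj := dist (x j) xs
        set dk := dist (x k) xs
        have h1 : dj ≤ dist (x j) y + dist y xs := dist_triangle _ _ _
        have h2 : dist y xs ≥ dj - dj/4 := by
          have : dist (x j) y = dist y (x j) := dist_comm _ _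
          linarith [this ▸ h1, hyj]
        have hdk : dk < dj / 4 := hdlt k j hjk
        intro hyk
        have h3 : dist y xs ≤ dist y (x k) + dk := dist_triangle _ _ _
        have h4 : dist y xs < dk/4 + dk := by linarith
        have := hd0 j
        linarith
      intro j k hjk y
      by_contra hcon
      push_neg at hcon
      obtain ⟨hj, hk⟩ := hcon
      have hyj : y ∈ Metric.ball (x j) (dist (x j) xs / 4) := by
        by_contra h; exact hj (hf0 j y h)
      have hyk : y ∈ Metric.ball (x k) (dist (x k) xs / 4) := by
        by_contra h; exact hk (hf0 k y h)
      rcases lt_or_gt_of_ne hjk with h | h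
      · have := hball j k h
        exact absurd (Set.mem_inter hyj hyk) (by rw [this]; exact Set.notMem_empty y)
      · have := hball k j h
        exact absurd (Set.mem_inter hyk hyj) (by rw [this]; exact Set.notMem_empty y)
    · -- convergence
      have hxtend : Tendsto x atTop (𝓝 xs) := by
        rw [tendsto_iff_dist_tendsto_zero]
        have hbound : ∀ k, dist (x k) xs ≤ dist (x 0) xs * (1/4)^k := by
          intro k
          induction k with
          | zero => simp
          | succ n ih =>
            have h1 := hdrec n
            have : dist (x (n+1)) xs ≤ dist (x n) xs / 4 := h1.le
            calc dist (x (n+1)) xs ≤ dist (x n) xs / 4 := this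
              _ ≤ (dist (x 0) xs * (1/4)^n) / 4 := by linarith
              _ = dist (x 0) xs * (1/4)^(n+1) := by ring
        refine squeeze_zero (fun k => (hd0 k).le) hbound ?_
        have : Tendsto (fun k : ℕ => (1/4:ℝ)^k) atTop (𝓝 0) :=
          tendsto_pow_atTop_nhds_zero_of_lt_one (by norm_num) (by norm_num)
        simpa using this.const_mul (dist (x 0) xs)
      intro g
      exact ⟨g xs, ((map_continuous g).tendsto xs).comp hxtend⟩
  · -- noncompact case
    haveI : SigmaCompactSpace Ω := inferInstance
    let K : CompactExhaustion Ω := CompactExhaustion.choice Ω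
    have hstep : ∀ C : Set Ω, IsCompact C → ∃ (p : Ω) (f : C(Ω, ℝ)),
        f p = 1 ∧ (∀ y, f y ∈ Set.Icc (0:ℝ) 1) ∧ HasCompactSupport f ∧
        tsupport f ⊆ Cᶜ ∧ p ∉ C := by
      intro C hC
      have hne : Cᶜ.Nonempty := by
        rcases Set.eq_empty_or_nonempty Cᶜ with h | h
        · exfalso
          apply hcomp
          refine ⟨?_⟩
          rwa [Set.compl_empty_iff.1 h] at hC
        · exact h
      obtain ⟨p, hp⟩ := hne
      obtain ⟨Kc, hKc, hpK, hKsub⟩ := exists_compact_subset (hC.isClosed.isOpen_compl) hp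
      obtain ⟨f, hf1, hf0, hfc, hficc⟩ := exists_continuous_one_zero_of_isCompact
        (isCompact_singleton (x := p)) (isOpen_interior.isClosed_compl)
        (by rw [Set.disjoint_singleton_left]; simpa using hpK)
      refine ⟨p, f, hf1 rfl, hficc, hfc, ?_, hp⟩
      have hsupp : Function.support f ⊆ interior Kc := by
        intro y hy
        by_contra h
        exact hy (hf0 h)
      calc tsupport f ⊆ Kc := closure_minimal (hsupp.trans interior_subset) hKc.isClosed
        _ ⊆ Cᶜ := hKsub
    choose p f hf1 hficc hfcs hfsupp hpC using hstep
    let D : ℕ → {s : Set Ω // IsCompact s} := fun n => Nat.rec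
      (⟨∅, isCompact_empty⟩ : {s : Set Ω // IsCompact s})
      (fun n prev => ⟨prev.1 ∪ (K n ∪ tsupport (f prev.1 prev.2)),
        prev.2.union ((K.isCompact n).union (hfcs prev.1 prev.2))⟩) n
    set x : ℕ → Ω := fun k => p (D k).1 (D k).2 with hxdef
    set φ : ℕ → C(Ω, ℝ) := fun k => f (D k).1 (D k).2 with hφdef
    have hDmono : ∀ j k, j ≤ k → (D j).1 ⊆ (D k).1 := by
      intro j k hjk
      induction k with
      | zero => cases Nat.le_zero.1 hjk; exact subset_rfl
      | succ n ih =>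
        rcases Nat.le_succ_iff.1 hjk with h | rfl
        · exact (ih h).trans Set.subset_union_left
        · exact subset_rfl
    have hsupp_sub : ∀ k, tsupport (φ k) ⊆ (D (k+1)).1 := by
      intro k
      exact (Set.subset_union_right).trans' (Set.subset_union_right)
    have hKsub : ∀ n, K n ⊆ (D (n+1)).1 := by
      intro n
      exact (Set.subset_union_left).trans (Set.subset_union_right)
    have hxcoc : Tendsto x atTop (cocompact Ω) := by
      rw [hasBasis_cocompact.tendsto_right_iff]
      intro s hs
      obtain ⟨n, hn⟩ := K.exists_superset_of_isCompact hs
      filter_upwards [eventually_ge_atTop (n+1)] with k hk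
      intro hxk
      exact hpC (D k).1 (D k).2 (hDmono (n+1) k hk (hKsub n (hn hxk)))
    refine ⟨x, fun k => ⟨φ k, (hfcs _ _).is_zero_at_infty⟩, ?_, ?_, ?_, ?_⟩
    · intro k; exact hf1 _ _
    · intro k y; exact hficc _ _ y
    · intro j k hjk y
      by_contra hcon
      push_neg at hcon
      obtain ⟨hj, hk⟩ := hcon
      have hmem : ∀ i, (⟨φ i, (hfcs _ _).is_zero_at_infty⟩ : C₀(Ω,ℝ)) y = φ i y := fun i => rfl
      rw [hmem] at hj hk
      have hyj : y ∈ tsupport (φ j) := subset_tsupport _ hj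
      have hyk : y ∈ tsupport (φ k) := subset_tsupport _ hk
      rcases lt_or_gt_of_ne hjk with h | h
      · exact hfsupp (D k).1 (D k).2 hyk (hDmono (j+1) k h (hsupp_sub j hyj))
      · exact hfsupp (D j).1 (D j).2 hyj (hDmono (k+1) j h (hsupp_sub k hyk))
    · intro g
      refine ⟨0, ?_⟩
      exact (zero_at_infty g).comp hxcoc

/-- A Banach space `F` is *variationally sequentially complete* (vsc) if there are a set
`𝓕 ⊆ F*` and a constant `λ ≥ 1` such that `(1/λ) sup_{ψ∈𝓕} |ψ x| ≤ ‖x‖ ≤ λ sup_{ψ∈𝓕} |ψ x|`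
for all `x`, and every bounded sequence `(zₙ)` in `F` such that `ψ(zₙ)` converges for all
`ψ ∈ 𝓕` admits `z ∈ F` with `ψ(zₙ) → ψ(z)` for all `ψ ∈ 𝓕`. -/
def IsVSC (F : Type*) [NormedAddCommGroup F] [NormedSpace ℝ F] : Prop :=
  ∃ (S : Set (StrongDual ℝ F)) (lam : ℝ), 1 ≤ lam ∧
    (∀ x : F, ∀ ψ ∈ S, ‖ψ x‖ ≤ lam * ‖x‖) ∧
    (∀ x : F, ‖x‖ ≤ lam * sSup ((fun ψ : StrongDual ℝ F => ‖ψ x‖) '' S)) ∧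
    (∀ z : ℕ → F, (∃ C : ℝ, ∀ n, ‖z n‖ ≤ C) →
      (∀ ψ ∈ S, ∃ l : ℝ, Tendsto (fun n => ψ (z n)) atTop (𝓝 l)) →
      ∃ w : F, ∀ ψ ∈ S, Tendsto (fun n => ψ (z n)) atTop (𝓝 (ψ w)))

/-- For every infinite second countable locally compact Hausdorff space `Ω`, the Banach
space `C₀(Ω,ℝ)` is not variationally sequentially complete. -/
theorem c0_not_vsc (Ω : Type*) [TopologicalSpace Ω] [LocallyCompactSpace Ω] [T2Space Ω]
    [SecondCountableTopology Ω] [Infinite Ω] :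
    ¬ IsVSC C₀(Ω, ℝ) := by
  rintro ⟨S, lam, hlam, h1, h2, h3⟩
  classical
  obtain ⟨x, φ, hφ1, hφicc, hdisj, hconv⟩ := exists_bumps Ω
  obtain ⟨A, hAinf, hAD⟩ := exists_ad_family
  have hlam0 : (0:ℝ) < lam := lt_of_lt_of_le one_pos hlam
  -- pointwise evaluation of finite sums in C₀
  have hcoe_sum : ∀ {ι : Type} (F : Finset ι) (h : ι → C₀(Ω,ℝ)) (y : Ω),
      (∑ k ∈ F, h k) y = ∑ k ∈ F, h k y := by
    intro ι F h y
    induction F using Finset.induction with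
    | empty => simp
    | insert _ _ hnot ih =>
      rename_i a s
      rw [Finset.sum_insert hnot, Finset.sum_insert hnot, ← ih]
      rfl
  have hadd_apply : ∀ (u v : C₀(Ω,ℝ)) (y : Ω), (u + v) y = u y + v y := fun u v y => rfl
  -- pointwise bound
  have hptwise : ∀ (c : ℕ → ℝ), (∀ k, |c k| ≤ 1) → ∀ (F : Finset ℕ) (y : Ω),
      |∑ k ∈ F, c k * φ k y| ≤ 1 := by
    intro c hc F y
    by_cases hex : ∃ k0 ∈ F, φ k0 y ≠ 0
    · obtain ⟨k0, hk0F, hk0⟩ := hex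
      have hsum : ∑ k ∈ F, c k * φ k y = c k0 * φ k0 y := by
        refine Finset.sum_eq_single_of_mem k0 hk0F ?_
        intro b hb hbne
        rcases hdisj b k0 hbne y with h | h
        · rw [h, mul_zero]
        · exact absurd h hk0
      rw [hsum, abs_mul]
      have hb1 : |φ k0 y| ≤ 1 := abs_le.2 ⟨by linarith [(hφicc k0 y).1], (hφicc k0 y).2⟩
      calc |c k0| * |φ k0 y| ≤ 1 * 1 :=
            mul_le_mul (hc k0) hb1 (abs_nonneg _) zero_le_one
        _ = 1 := by norm_num
    · push_neg at hex
      have : ∑ k ∈ F, c k * φ k y = 0 :=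
        Finset.sum_eq_zero (fun k hk => by rw [hex k hk, mul_zero])
      simp [this]
  -- norm bound on coefficient combinations
  have hnorm : ∀ (c : ℕ → ℝ), (∀ k, |c k| ≤ 1) → ∀ (F : Finset ℕ),
      ‖∑ k ∈ F, c k • φ k‖ ≤ 1 := by
    intro c hc F
    rw [← ZeroAtInftyContinuousMap.norm_toBCF_eq_norm,
      BoundedContinuousFunction.norm_le zero_le_one]
    intro y
    have hval : (∑ k ∈ F, c k • φ k) y = ∑ k ∈ F, c k * φ k y := by
      rw [hcoe_sum]
      exact Finset.sum_congr rfl (fun k _ => rfl)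
    have : (∑ k ∈ F, c k • φ k).toBCF y = (∑ k ∈ F, c k • φ k) y := rfl
    rw [this, hval, Real.norm_eq_abs]
    exact hptwise c hc F y
  -- evaluation bound
  have heval : ∀ (g : C₀(Ω,ℝ)) (y : Ω), |g y| ≤ ‖g‖ := by
    intro g y
    have := g.toBCF.norm_coe_le_norm y
    simpa [Real.norm_eq_abs] using this
  -- partial sums of |ψ (φ k)| are bounded by lam
  have hpartial : ∀ ψ ∈ S, ∀ n : ℕ, ∑ k ∈ Finset.range n, |ψ (φ k)| ≤ lam := by
    intro ψ hψ n
    set c : ℕ → ℝ := fun k => if ψ (φ k) < 0 then -1 else 1 with hcdef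
    have hc : ∀ k, |c k| ≤ 1 := by
      intro k; by_cases h : ψ (φ k) < 0 <;> simp [hcdef, h]
    have hsum : ∑ k ∈ Finset.range n, |ψ (φ k)| = ψ (∑ k ∈ Finset.range n, c k • φ k) := by
      rw [map_sum]
      refine Finset.sum_congr rfl (fun k _ => ?_)
      rw [map_smul]
      by_cases h : ψ (φ k) < 0
      · simp [hcdef, h, abs_of_neg h]
      · simp [hcdef, h, abs_of_nonneg (not_lt.1 h)]
    rw [hsum]
    calc ψ (∑ k ∈ Finset.range n, c k • φ k)
        ≤ ‖ψ (∑ k ∈ Finset.range n, c k • φ k)‖ := le_abs_self _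
      _ ≤ lam * ‖∑ k ∈ Finset.range n, c k • φ k‖ := h1 _ ψ hψ
      _ ≤ lam * 1 := mul_le_mul_of_nonneg_left (hnorm c hc _) hlam0.le
      _ = lam := mul_one lam
  have habs : ∀ ψ ∈ S, Summable (fun k => |ψ (φ k)|) := fun ψ hψ =>
    summable_of_sum_range_le (fun n => abs_nonneg _) (hpartial ψ hψ)
  have htsum : ∀ ψ ∈ S, ∑' k, |ψ (φ k)| ≤ lam := fun ψ hψ =>
    Real.tsum_le_of_sum_range_le (fun n => abs_nonneg _) (hpartial ψ hψ)
  -- indicator coefficients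
  set χ : Set ℕ → ℕ → ℝ := fun B k => if k ∈ B then 1 else 0 with hχdef
  have hχ1 : ∀ B k, |χ B k| ≤ 1 := by
    intro B k; by_cases h : k ∈ B <;> simp [hχdef, h]
  have hsummB : ∀ (B : Set ℕ), ∀ ψ ∈ S, Summable (fun k => χ B k * ψ (φ k)) := by
    intro B ψ hψ
    refine Summable.of_norm_bounded (habs ψ hψ) (fun k => ?_)
    rw [Real.norm_eq_abs, abs_mul]
    calc |χ B k| * |ψ (φ k)| ≤ 1 * |ψ (φ k)| :=
          mul_le_mul_of_nonneg_right (hχ1 B k) (abs_nonneg _)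
      _ = |ψ (φ k)| := one_mul _
  -- existence of "union" elements
  have hwex : ∀ B : Set ℕ, ∃ wB : C₀(Ω,ℝ), ∀ ψ ∈ S, ψ wB = ∑' k, χ B k * ψ (φ k) := by
    intro B
    set z : ℕ → C₀(Ω,ℝ) := fun n => ∑ k ∈ Finset.range n, χ B k • φ k with hzdef
    have hzb : ∀ n, ‖z n‖ ≤ 1 := fun n => hnorm (χ B) (hχ1 B) _
    have hztend : ∀ ψ ∈ S, Tendsto (fun n => ψ (z n)) atTop (𝓝 (∑' k, χ B k * ψ (φ k))) := by
      intro ψ hψ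
      have heq : (fun n => ψ (z n)) = fun n => ∑ k ∈ Finset.range n, χ B k * ψ (φ k) := by
        funext n
        rw [hzdef, map_sum]
        exact Finset.sum_congr rfl (fun k _ => by rw [map_smul, smul_eq_mul])
      rw [heq]
      exact (hsummB B ψ hψ).hasSum.tendsto_sum_nat
    obtain ⟨wB, hwB⟩ := h3 z ⟨1, hzb⟩ (fun ψ hψ => ⟨_, hztend ψ hψ⟩)
    exact ⟨wB, fun ψ hψ => tendsto_nhds_unique (hwB ψ hψ) (hztend ψ hψ)⟩
  choose w hw using hwex
  -- uniqueness from the norming inequality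
  have huniq : ∀ u v : C₀(Ω,ℝ), (∀ ψ ∈ S, ψ u = ψ v) → u = v := by
    intro u v h
    have h0 : ∀ ψ ∈ S, ψ (u - v) = 0 := fun ψ hψ => by rw [map_sub, h ψ hψ, sub_self]
    have hle : ‖u - v‖ ≤ lam * sSup ((fun ψ => ‖ψ (u - v)‖) '' S) := h2 _
    have hsup : sSup ((fun ψ => ‖ψ (u - v)‖) '' S) ≤ 0 := by
      refine Real.sSup_le ?_ le_rfl
      rintro t ⟨ψ, hψ, rfl⟩
      simp [h0 ψ hψ]
    have : ‖u - v‖ ≤ 0 := by nlinarith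
    have := norm_le_zero_iff.1 this
    exact sub_eq_zero.1 this
  -- norm bound for w
  have hwnorm : ∀ B, ‖w B‖ ≤ lam * lam := by
    intro B
    refine le_trans (h2 (w B)) ?_
    have hsup : sSup ((fun ψ => ‖ψ (w B)‖) '' S) ≤ lam := by
      refine Real.sSup_le ?_ hlam0.le
      rintro t ⟨ψ, hψ, rfl⟩
      show ‖ψ (w B)‖ ≤ lam
      rw [Real.norm_eq_abs, hw B ψ hψ]
      have hs1 : Summable (fun k => ‖χ B k * ψ (φ k)‖) := by
        refine Summable.of_nonneg_of_le (fun k => norm_nonneg _) (fun k => ?_) (habs ψ hψ)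
        rw [Real.norm_eq_abs, abs_mul]
        calc |χ B k| * |ψ (φ k)| ≤ 1 * |ψ (φ k)| :=
              mul_le_mul_of_nonneg_right (hχ1 B k) (abs_nonneg _)
          _ = |ψ (φ k)| := one_mul _
      calc |∑' k, χ B k * ψ (φ k)| ≤ ∑' k, ‖χ B k * ψ (φ k)‖ := by
            rw [← Real.norm_eq_abs]; exact norm_tsum_le_tsum_norm hs1
        _ ≤ ∑' k, |ψ (φ k)| := by
            refine Summable.tsum_le_tsum (fun k => ?_) hs1 (habs ψ hψ)
            rw [Real.norm_eq_abs, abs_mul]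
            calc |χ B k| * |ψ (φ k)| ≤ 1 * |ψ (φ k)| :=
                  mul_le_mul_of_nonneg_right (hχ1 B k) (abs_nonneg _)
              _ = |ψ (φ k)| := one_mul _
        _ ≤ lam := htsum ψ hψ
    exact mul_le_mul_of_nonneg_left hsup hlam0.le
  -- additivity of w
  have hadd : ∀ B C : Set ℕ, Disjoint B C → w (B ∪ C) = w B + w C := by
    intro B C hBC
    apply huniq
    intro ψ hψ
    rw [map_add, hw _ ψ hψ, hw B ψ hψ, hw C ψ hψ,
      ← Summable.tsum_add (hsummB B ψ hψ) (hsummB C ψ hψ)]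
    refine tsum_congr (fun k => ?_)
    have hval : χ (B ∪ C) k = χ B k + χ C k := by
      by_cases hb : k ∈ B
      · have hc : k ∉ C := Set.disjoint_left.1 hBC hb
        simp [hχdef, hb, hc]
      · by_cases hc : k ∈ C <;> simp [hχdef, hb, hc]
    rw [hval, add_mul]
  -- w on finite sets
  have hfin : ∀ F : Finset ℕ, w (↑F) = ∑ k ∈ F, φ k := by
    intro F
    apply huniq
    intro ψ hψ
    rw [hw _ ψ hψ, map_sum, tsum_eq_sum (s := F) ?_]
    · refine Finset.sum_congr rfl (fun k hk => ?_)
      have : χ (↑F) k = 1 := by simp [hχdef, hk]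
      rw [this, one_mul]
    · intro k hk
      have : χ (↑F) k = 0 := by simp [hχdef, hk]
      rw [this, zero_mul]
  have hw0 : w ∅ = 0 := by
    have := hfin ∅
    simpa using this
  -- finite disjoint unions
  have haddF : ∀ (T : Finset ℝ) (B : ℝ → Set ℕ),
      (∀ r ∈ T, ∀ s ∈ T, r ≠ s → Disjoint (B r) (B s)) →
      w (⋃ r ∈ T, B r) = ∑ r ∈ T, w (B r) := by
    intro T
    induction T using Finset.induction with
    | empty => intro B _; simpa using hw0
    | insert _ _ hnot ih =>
      rename_i a s
      intro B hdis
      rw [Finset.sum_insert hnot]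
      have hU : (⋃ r ∈ insert a s, B r) = B a ∪ ⋃ r ∈ s, B r := by
        simp [Set.biUnion_insert]
      have hd1 : Disjoint (B a) (⋃ r ∈ s, B r) := by
        refine Set.disjoint_iUnion₂_right.2 (fun r hr => ?_)
        exact hdis a (Finset.mem_insert_self a s) r (Finset.mem_insert_of_mem hr)
          (fun h => hnot (h ▸ hr))
      have hd2 : ∀ r ∈ s, ∀ t ∈ s, r ≠ t → Disjoint (B r) (B t) := by
        intro r hr t ht hrt
        exact hdis r (Finset.mem_insert_of_mem hr) t (Finset.mem_insert_of_mem ht) hrt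
      rw [hU, hadd _ _ hd1, ih B hd2]
  -- evaluation of w on finite sets avoiding n
  have hfin_eval : ∀ (D : Set ℕ), D.Finite → ∀ n ∉ D, w D (x n) = 0 := by
    intro D hD n hn
    have hDeq : D = (↑hD.toFinset : Set ℕ) := by simp
    rw [hDeq, hfin, hcoe_sum]
    refine Finset.sum_eq_zero (fun k hk => ?_)
    have hkD : k ∈ D := by simpa using hk
    have hkn : k ≠ n := fun h => hn (h ▸ hkD)
    rcases hdisj k n hkn (x n) with h | h
    · exact h
    · rw [hφ1 n] at h; norm_num at h
  -- counting lemma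
  have hbadfin : ∀ n : ℕ, {r : ℝ | (1/4 : ℝ) ≤ |w (A r \ {n}) (x n)|}.Finite := by
    intro n
    rw [← Set.not_infinite]
    intro hinf
    set m : ℕ := 2 * (Nat.floor (4 * (lam * lam)) + 1) with hmdef
    obtain ⟨T, hTsub, hTfin, hTcard⟩ := hinf.exists_subset_ncard_eq m
    set Tf : Finset ℝ := hTfin.toFinset with hTfdef
    have hTfcard : Tf.card = m := by
      rw [hTfdef, ← Set.ncard_eq_toFinset_card T hTfin, hTcard]
    set B : ℝ → Set ℕ := fun r => (A r \ {n}) \ ⋃ r' ∈ Tf.erase r, A r' with hBdef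
    have hBsub : ∀ r, B r ⊆ A r := fun r k hk => hk.1.1
    have hBdisj : ∀ r ∈ Tf, ∀ s ∈ Tf, r ≠ s → Disjoint (B r) (B s) := by
      intro r hr s hs hrs
      rw [Set.disjoint_left]
      intro k hk hks
      exact hk.2 (Set.mem_biUnion (Finset.mem_erase.2 ⟨hrs.symm, hs⟩) (hBsub s hks))
    have hBval : ∀ r ∈ Tf, (1/4 : ℝ) ≤ |w (B r) (x n)| := by
      intro r hr
      have hrT : r ∈ T := by
        rw [hTfdef] at hr; simpa using hr
      have hrbad : (1/4 : ℝ) ≤ |w (A r \ {n}) (x n)| := hTsub hrT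
      set Dd : Set ℕ := (A r \ {n}) ∩ ⋃ r' ∈ Tf.erase r, A r' with hDddef
      have hsplit : A r \ {n} = B r ∪ Dd := by
        ext k
        simp only [hBdef, hDddef, Set.mem_union, Set.mem_diff, Set.mem_inter_iff]
        tauto
      have hdisjBD : Disjoint (B r) Dd := by
        rw [Set.disjoint_left]
        intro k hk hkD
        exact hk.2 hkD.2
      have hDfin : Dd.Finite := by
        have hsub : Dd ⊆ ⋃ r' ∈ Tf.erase r, (A r ∩ A r') := by
          rintro k ⟨hk1, hk2⟩
          obtain ⟨r', hr', hkr'⟩ := Set.mem_iUnion₂.1 hk2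
          exact Set.mem_iUnion₂.2 ⟨r', hr', ⟨hk1.1, hkr'⟩⟩
        refine Set.Finite.subset ?_ hsub
        refine Set.Finite.biUnion (Tf.erase r).finite_toSet (fun r' hr' => ?_)
        exact hAD r r' (Ne.symm (Finset.ne_of_mem_erase hr'))
      have hDn : n ∉ Dd := fun h => h.1.2 rfl
      have hkey : w (A r \ {n}) (x n) = w (B r) (x n) := by
        rw [hsplit, hadd _ _ hdisjBD, hadd_apply, hfin_eval Dd hDfin n hDn, add_zero]
      rwa [hkey] at hrbad
    -- sign counting
    set P : Finset ℝ := Tf.filter (fun r => 0 ≤ w (B r) (x n)) with hPdef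
    set N : Finset ℝ := Tf.filter (fun r => ¬ 0 ≤ w (B r) (x n)) with hNdef
    have hGbound : ∀ G : Finset ℝ, G ⊆ Tf → |∑ r ∈ G, w (B r) (x n)| ≤ lam * lam := by
      intro G hG
      have : ∑ r ∈ G, w (B r) (x n) = w (⋃ r ∈ G, B r) (x n) := by
        rw [haddF G B (fun r hr s hs hrs => hBdisj r (hG hr) s (hG hs) hrs), hcoe_sum]
      rw [this]
      exact le_trans (heval _ _) (hwnorm _)
    have hPcard : (P.card : ℝ) * (1/4) ≤ lam * lam := by
      have hterm : ∀ r ∈ P, (1/4 : ℝ) ≤ w (B r) (x n) := by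
        intro r hr
        rw [hPdef, Finset.mem_filter] at hr
        have := hBval r hr.1
        rwa [abs_of_nonneg hr.2] at this
      have hsum : (P.card : ℝ) * (1/4) ≤ ∑ r ∈ P, w (B r) (x n) := by
        have := Finset.card_nsmul_le_sum P (fun r => w (B r) (x n)) (1/4 : ℝ) hterm
        simpa [nsmul_eq_mul] using this
      refine le_trans hsum (le_trans (le_abs_self _) ?_)
      exact hGbound P (Finset.filter_subset _ _)
    have hNcard : (N.card : ℝ) * (1/4) ≤ lam * lam := by
      have hterm : ∀ r ∈ N, w (B r) (x n) ≤ -(1/4 : ℝ) := by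
        intro r hr
        rw [hNdef, Finset.mem_filter] at hr
        have := hBval r hr.1
        have hneg : w (B r) (x n) < 0 := not_le.1 hr.2
        rw [abs_of_neg hneg] at this
        linarith
      have hsum : ∑ r ∈ N, w (B r) (x n) ≤ -((N.card : ℝ) * (1/4)) := by
        have := Finset.sum_le_card_nsmul N (fun r => w (B r) (x n)) (-(1/4 : ℝ)) hterm
        simp only [nsmul_eq_mul] at this
        linarith [this]
      have habs' := hGbound N (Finset.filter_subset _ _)
      have := neg_abs_le (∑ r ∈ N, w (B r) (x n))
      linarith [abs_le.1 habs']
    have hcards : P.card + N.card = Tf.card :=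
      Finset.card_filter_add_card_filter_not (p := fun r => 0 ≤ w (B r) (x n))
    have hmle : (m : ℝ) ≤ 8 * (lam * lam) := by
      have : ((P.card + N.card : ℕ) : ℝ) = (P.card : ℝ) + (N.card : ℝ) := by push_cast; ring
      rw [← hTfcard, ← hcards]
      push_cast
      linarith
    have hmgt : 8 * (lam * lam) < (m : ℝ) := by
      have hfl : 4 * (lam * lam) < (Nat.floor (4 * (lam * lam)) : ℝ) + 1 :=
        Nat.lt_floor_add_one _
      rw [hmdef]
      push_cast
      linarith
    linarith
  -- endgame
  set bad : Set ℝ := ⋃ n : ℕ, {r : ℝ | (1/4 : ℝ) ≤ |w (A r \ {n}) (x n)|} with hbaddef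
  have hbadc : bad.Countable := Set.countable_iUnion (fun n => (hbadfin n).countable)
  have hpick : ∀ s : Set ℝ, s.Countable → ∃ r : ℝ, r ∉ s := by
    intro s hs
    by_contra hcon
    push_neg at hcon
    have : s = Set.univ := Set.eq_univ_of_forall hcon
    rw [this] at hs
    exact Set.not_countable_univ hs
  obtain ⟨r, hr⟩ := hpick bad hbadc
  obtain ⟨s, hs⟩ := hpick (bad ∪ {r}) (hbadc.union (Set.countable_singleton r))
  have hsr : s ≠ r := fun h => hs (Set.mem_union_right _ (by simp [h]))
  have hsbad : s ∉ bad := fun h => hs (Set.mem_union_left _ h)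
  have hgood : ∀ ρ : ℝ, ρ ∉ bad → ∀ n : ℕ, |w (A ρ \ {n}) (x n)| < 1/4 := by
    intro ρ hρ n
    by_contra hcon
    push_neg at hcon
    exact hρ (Set.mem_iUnion.2 ⟨n, hcon⟩)
  -- values of w (A r) along the sequence
  have hinA : ∀ k ∈ A r, (3/4 : ℝ) ≤ w (A r) (x k) := by
    intro k hk
    have hsplit : A r = (A r \ {k}) ∪ {k} := by
      ext j
      simp only [Set.mem_union, Set.mem_diff, Set.mem_singleton_iff]
      constructor
      · intro hj
        by_cases h : j = k
        · exact Or.inr h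
        · exact Or.inl ⟨hj, h⟩
      · rintro (⟨hj, -⟩ | rfl)
        · exact hj
        · exact hk
    have hdisj' : Disjoint (A r \ {k}) ({k} : Set ℕ) := by
      rw [Set.disjoint_right]
      rintro j rfl hj
      exact hj.2 rfl
    have hsing : w ({k} : Set ℕ) = φ k := by
      have : ({k} : Set ℕ) = (↑({k} : Finset ℕ) : Set ℕ) := by simp
      rw [this, hfin]
      simp
    have hval : w (A r) (x k) = w (A r \ {k}) (x k) + 1 := by
      conv_lhs => rw [hsplit]
      rw [hadd _ _ hdisj', hadd_apply, hsing, hφ1 k]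
    rw [hval]
    have := hgood r hr k
    have := abs_lt.1 this
    linarith [this.1]
  have houtA : ∀ k ∈ A s \ A r, |w (A r) (x k)| < 1/4 := by
    intro k hk
    have hkr : k ∉ A r := hk.2
    have heq : A r \ {k} = A r := by
      ext j
      simp only [Set.mem_diff, Set.mem_singleton_iff]
      constructor
      · exact fun h => h.1
      · intro hj
        exact ⟨hj, fun h => hkr (h ▸ hj)⟩
    have := hgood r hr k
    rwa [heq] at this
  obtain ⟨c, hc⟩ := hconv (w (A r))
  have hfreq1 : ∃ᶠ k in atTop, k ∈ A r := Nat.frequently_atTop_iff_infinite.2 (hAinf r)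
  have hASdiff : (A s \ A r).Infinite := by
    have : A s \ A r = A s \ (A s ∩ A r) := by rw [Set.diff_self_inter]
    rw [this]
    exact (hAinf s).diff (hAD s r hsr)
  have hfreq2 : ∃ᶠ k in atTop, k ∈ A s \ A r :=
    Nat.frequently_atTop_iff_infinite.2 hASdiff
  have h34 : (3/4 : ℝ) ≤ c := by
    have hf : ∃ᶠ k in atTop, w (A r) (x k) ∈ Set.Ici (3/4 : ℝ) :=
      hfreq1.mono (fun k hk => hinA k hk)
    have hf' : ∃ᶠ y in 𝓝 c, y ∈ Set.Ici (3/4 : ℝ) := hc.frequently hf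
    have : c ∈ closure (Set.Ici (3/4 : ℝ)) := mem_closure_iff_frequently.2 hf'
    rwa [isClosed_Ici.closure_eq] at this
  have h14 : c ≤ 1/4 := by
    have hf : ∃ᶠ k in atTop, w (A r) (x k) ∈ Set.Icc (-(1/4) : ℝ) (1/4) := by
      refine hfreq2.mono (fun k hk => ?_)
      have := abs_lt.1 (houtA k hk)
      exact ⟨by linarith [this.1], by linarith [this.2]⟩
    have hf' : ∃ᶠ y in 𝓝 c, y ∈ Set.Icc (-(1/4) : ℝ) (1/4) := hc.frequently hf
    have : c ∈ closure (Set.Icc (-(1/4) : ℝ) (1/4)) := mem_closure_iff_frequently.2 hf'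
    rw [isClosed_Icc.closure_eq] at this
    exact this.2
  linarith
end
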